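/- arXiv:2407.20486 — 4 statements merged into one kernel-verified Lean document; each statement's English description precedes it below -/
import Mathlib

section
/- Let c_0, ..., c_l be complex numbers. The pairing ⟨f, g⟩ := Σ_{c} res_{z=c}(f(z)g(z)) (sum over all poles) between the quotient space ℂ[z]/⟨∏_{i=0}^{l}(z-c_i)⟩ and the space L of rational functions spanned by 1/∏_{ν=0}^{i}(z-c_ν) for i=0,...,l is non-degenerate; moreover the bases {1, (z-c_0), (z-c_0)(z-c_1), ..., ∏_{ν=0}^{l-1}(z-c_ν)} and {1/(z-c_0), 1/((z-c_0)(z-c_1)), ..., 1/∏_{ν=0}^{l}(z-c_ν)} are dual bases with respect to this pairing, i.e. ⟨∏_{ν=0}^{j-1}(z-c_ν), 1/∏_{ν=0}^{j'}(z-c_ν)⟩ = δ_{j,j'}. -/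
/-- Residue of a rational function at `c ∈ ℂ` (coefficient of `1/(z-c)` in the
Laurent expansion at `c`). -/
noncomputable def resAt (c : ℂ) (f : RatFunc ℂ) : ℂ :=
  ((RatFunc.laurent c f : RatFunc ℂ) : LaurentSeries ℂ).coeff (-1)

/-- The pairing `⟨p, g⟩ = Σ_{c ∈ {c_0,…,c_l}} res_{z=c} (p(z)·g(z))` between polynomials
(representing classes of `ℂ[z]/⟨∏(z-c_i)⟩`) and rational functions. -/
noncomputable def pairingRes (l : ℕ) (c : Fin (l + 1) → ℂ) (p : Polynomial ℂ)
    (g : RatFunc ℂ) : ℂ :=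
  ∑ a ∈ Finset.image c Finset.univ,
    resAt a (algebraMap (Polynomial ℂ) (RatFunc ℂ) p * g)

/-- The `j`-th element `∏_{ν=0}^{j-1}(z - c_ν)` of the standard basis of
`ℂ[z]/⟨∏_{i=0}^l (z-c_i)⟩` (empty product = 1). -/
noncomputable def stdPolyBasis (l : ℕ) (c : Fin (l + 1) → ℂ) (j : Fin (l + 1)) :
    Polynomial ℂ :=
  ∏ ν ∈ Finset.Iio j, (Polynomial.X - Polynomial.C (c ν))

/-- The `j'`-th element `1/∏_{ν=0}^{j'}(z - c_ν)` of the standard basis of the space `L`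
spanned by the partial fractions. -/
noncomputable def stdFracBasis (l : ℕ) (c : Fin (l + 1) → ℂ) (j' : Fin (l + 1)) :
    RatFunc ℂ :=
  1 / ∏ ν ∈ Finset.Iic j', (RatFunc.X - RatFunc.C (c ν))

open Polynomial


lemma resAt_zero (a : ℂ) : resAt a 0 = 0 := by
  unfold resAt; rw [map_zero]; simp

lemma resAt_add (a : ℂ) (f g : RatFunc ℂ) : resAt a (f + g) = resAt a f + resAt a g := by
  unfold resAt; rw [map_add, map_add, HahnSeries.coeff_add]

lemma resAt_sub (a : ℂ) (f g : RatFunc ℂ) : resAt a (f - g) = resAt a f - resAt a g := by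
  unfold resAt; rw [map_sub, map_sub, HahnSeries.coeff_sub]

lemma coe_C' (k : ℂ) : ((RatFunc.C k : RatFunc ℂ) : LaurentSeries ℂ) = HahnSeries.C k := by
  have := RatFunc.coe_coe (F := ℂ) (Polynomial.C k)
  rw [← RatFunc.algebraMap_C]
  refine this.symm.trans ?_
  simp

lemma resAt_smul (a k : ℂ) (f : RatFunc ℂ) : resAt a (k • f) = k * resAt a f := by
  unfold resAt; rw [AlgHom.map_smul_of_tower, RatFunc.smul_eq_C_mul, map_mul, coe_C',
    HahnSeries.C_mul_eq_smul, HahnSeries.coeff_smul, smul_eq_mul]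

lemma resAt_sum {ι : Type*} (a : ℂ) (s : Finset ι) (f : ι → RatFunc ℂ) :
    resAt a (∑ i ∈ s, f i) = ∑ i ∈ s, resAt a (f i) := by
  classical
  induction s using Finset.cons_induction with
  | empty => simp [resAt_zero]
  | cons i s hi ih => rw [Finset.sum_cons, Finset.sum_cons, resAt_add, ih]

lemma resAt_algebraMap (a : ℂ) (p : ℂ[X]) :
    resAt a (algebraMap ℂ[X] (RatFunc ℂ) p) = 0 := by
  unfold resAt
  rw [RatFunc.laurent_algebraMap]
  have h : (algebraMap ℂ[X] (RatFunc ℂ) (taylor a p) : LaurentSeries ℂ)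
      = ((taylor a p : PowerSeries ℂ) : LaurentSeries ℂ) := by
    rw [RatFunc.coe_coe]; rfl
  rw [h, PowerSeries.coeff_coe]
  simp

lemma resAt_inv_pow (a b : ℂ) (m : ℕ) :
    resAt a (((RatFunc.X - RatFunc.C b) ^ m)⁻¹) = if a = b ∧ m = 1 then 1 else 0 := by
  unfold resAt
  rw [map_inv₀, map_pow, map_sub, RatFunc.laurent_X, RatFunc.laurent_C]
  have h1 : (RatFunc.X + RatFunc.C a - RatFunc.C b : RatFunc ℂ)
      = RatFunc.X - RatFunc.C (b - a) := by
    rw [map_sub]; ring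
  rw [h1, map_inv₀, map_pow, map_sub]
  rw [RatFunc.coe_X, coe_C']
  by_cases hab : a = b
  · subst hab
    simp only [sub_self, map_zero, sub_zero, HahnSeries.single_pow, one_pow, nsmul_eq_mul,
      mul_one]
    rw [HahnSeries.inv_single, inv_one, HahnSeries.coeff_single]
    by_cases hm : m = 1
    · simp [hm]
    · rw [if_neg, if_neg (by simp [hm])]
      omega
  · rw [if_neg (by simp [hab])]
    set d := b - a with hd
    have hdne : d ≠ 0 := sub_ne_zero.mpr (fun h => hab h.symm)
    set u : LaurentSeries ℂ := HahnSeries.single 1 1 - HahnSeries.C d with hu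
    have hu0 : u.coeff 0 = -d := by
      rw [hu, HahnSeries.coeff_sub, HahnSeries.coeff_single, HahnSeries.C_apply,
        HahnSeries.coeff_single]
      simp
    have hune : u ≠ 0 := by
      intro h
      apply hdne
      have := hu0
      rw [h] at this
      simpa using this.symm
    have horder : u.order = 0 := by
      apply le_antisymm
      · exact HahnSeries.order_le_of_coeff_ne_zero (by rw [hu0]; exact neg_ne_zero.mpr hdne)
      · by_contra hlt
        push_neg at hlt
        have hneg : ∀ n : ℤ, n < 0 → u.coeff n = 0 := by
          intro n hn
          rw [hu, HahnSeries.coeff_sub, HahnSeries.coeff_single, HahnSeries.C_apply,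
            HahnSeries.coeff_single, if_neg (by omega), if_neg (by omega)]
          simp
        exact (mt HahnSeries.coeff_order_eq_zero.mp hune) (hneg _ hlt)
    have hpowne : u ^ m ≠ 0 := pow_ne_zero _ hune
    have hpow_order : (u ^ m).order = 0 := by
      rw [HahnSeries.order_pow, horder, smul_zero]
    have hinvne : (u ^ m)⁻¹ ≠ 0 := inv_ne_zero hpowne
    have hinv_order : (u ^ m)⁻¹.order = 0 := by
      have h1 : ((u ^ m)⁻¹ * u ^ m).order = (u ^ m)⁻¹.order + (u ^ m).order :=
        HahnSeries.order_mul hinvne hpowne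
      rw [inv_mul_cancel₀ hpowne, HahnSeries.order_one, hpow_order, add_zero] at h1
      exact h1.symm
    exact HahnSeries.coeff_eq_zero_of_lt_order (by rw [hinv_order]; norm_num)

lemma X_sub_C_ne_zero' (r : ℂ) : (RatFunc.X - RatFunc.C r) ≠ 0 := by
  have h : RatFunc.X - RatFunc.C r
      = algebraMap ℂ[X] (RatFunc ℂ) (Polynomial.X - Polynomial.C r) := by
    rw [map_sub, RatFunc.algebraMap_X, RatFunc.algebraMap_C]
  rw [h]
  exact RatFunc.algebraMap_ne_zero (Polynomial.X_sub_C_ne_zero r)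

lemma prod_X_sub_C_ne_zero' {l : ℕ} (c : Fin (l + 1) → ℂ) (t : Finset (Fin (l + 1))) :
    (∏ ν ∈ t, (RatFunc.X - RatFunc.C (c ν))) ≠ 0 :=
  Finset.prod_ne_zero_iff.mpr fun ν _ => X_sub_C_ne_zero' (c ν)

lemma sum_res {l : ℕ} (c : Fin (l + 1) → ℂ) (s : Finset (Fin (l + 1))) (hs : s.Nonempty) :
    ∑ a ∈ Finset.image c Finset.univ,
        resAt a ((∏ ν ∈ s, (RatFunc.X - RatFunc.C (c ν)))⁻¹)
      = if s.card = 1 then 1 else 0 := by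
  classical
  have H : ∀ n : ℕ, ∀ s : Finset (Fin (l + 1)), s.card = n → s.Nonempty →
      ∑ a ∈ Finset.image c Finset.univ,
          resAt a ((∏ ν ∈ s, (RatFunc.X - RatFunc.C (c ν)))⁻¹)
        = if s.card = 1 then 1 else 0 := by
    intro n
    induction n using Nat.strong_induction_on with
    | _ n ih =>
      intro s hcard hne
      by_cases hn1 : s.card = 1
      · obtain ⟨ν, rfl⟩ := Finset.card_eq_one.mp hn1
        rw [if_pos hn1, Finset.prod_singleton, ← pow_one (RatFunc.X - RatFunc.C (c ν))]
        simp only [resAt_inv_pow, and_true]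
        rw [Finset.sum_ite_eq' (Finset.image c Finset.univ) (c ν) fun _ => (1 : ℂ)]
        rw [if_pos (Finset.mem_image_of_mem c (Finset.mem_univ ν))]
      · rw [if_neg hn1]
        obtain ⟨ν₀, hν₀⟩ := hne
        by_cases hconst : ∀ ν ∈ s, c ν = c ν₀
        · have hprodc : (∏ ν ∈ s, (RatFunc.X - RatFunc.C (c ν)))
              = (RatFunc.X - RatFunc.C (c ν₀)) ^ s.card := by
            rw [Finset.prod_congr rfl (fun ν hν => by rw [hconst ν hν]), Finset.prod_const]
          rw [hprodc]
          simp only [resAt_inv_pow, hn1, and_false, if_false]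
          exact Finset.sum_const_zero
        · push_neg at hconst
          obtain ⟨ν₁, hν₁, hne₁⟩ := hconst
          have hνne : ν₁ ≠ ν₀ := fun h => hne₁ (by rw [h])
          have hν₁' : ν₁ ∈ s.erase ν₀ := Finset.mem_erase.mpr ⟨hνne, hν₁⟩
          have h0 : (∏ ν ∈ s, (RatFunc.X - RatFunc.C (c ν)))
              = (RatFunc.X - RatFunc.C (c ν₀)) * ((RatFunc.X - RatFunc.C (c ν₁)) *
                  ∏ ν ∈ (s.erase ν₀).erase ν₁, (RatFunc.X - RatFunc.C (c ν))) := by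
            rw [← Finset.mul_prod_erase _ _ hν₀, ← Finset.mul_prod_erase _ _ hν₁']
          have h1 : (∏ ν ∈ s.erase ν₀, (RatFunc.X - RatFunc.C (c ν)))
              = (RatFunc.X - RatFunc.C (c ν₁)) *
                  ∏ ν ∈ (s.erase ν₀).erase ν₁, (RatFunc.X - RatFunc.C (c ν)) := by
            rw [← Finset.mul_prod_erase _ _ hν₁']
          have h2 : (∏ ν ∈ s.erase ν₁, (RatFunc.X - RatFunc.C (c ν)))
              = (RatFunc.X - RatFunc.C (c ν₀)) *
                  ∏ ν ∈ (s.erase ν₀).erase ν₁, (RatFunc.X - RatFunc.C (c ν)) := by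
            have hν₀' : ν₀ ∈ s.erase ν₁ := Finset.mem_erase.mpr ⟨hνne.symm, hν₀⟩
            rw [Finset.erase_right_comm, ← Finset.mul_prod_erase _ _ hν₀']
          have hab : c ν₁ - c ν₀ ≠ 0 := sub_ne_zero.mpr hne₁
          have hXb := X_sub_C_ne_zero' (c ν₀)
          have hXa := X_sub_C_ne_zero' (c ν₁)
          have hPne : (∏ ν ∈ (s.erase ν₀).erase ν₁, (RatFunc.X - RatFunc.C (c ν))) ≠ 0 :=
            prod_X_sub_C_ne_zero' c _
          have key : (∏ ν ∈ s, (RatFunc.X - RatFunc.C (c ν)))⁻¹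
              = (c ν₁ - c ν₀)⁻¹ • ((∏ ν ∈ s.erase ν₀, (RatFunc.X - RatFunc.C (c ν)))⁻¹
                  - (∏ ν ∈ s.erase ν₁, (RatFunc.X - RatFunc.C (c ν)))⁻¹) := by
            have hCab : RatFunc.C (c ν₁ - c ν₀) ≠ 0 := by
              rw [← RatFunc.algebraMap_C]
              exact RatFunc.algebraMap_ne_zero (Polynomial.C_ne_zero.mpr hab)
            rw [h0, h1, h2, RatFunc.smul_eq_C_mul, map_inv₀]
            set A := RatFunc.X - RatFunc.C (c ν₀) with hA
            set B := RatFunc.X - RatFunc.C (c ν₁) with hB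
            set P := ∏ ν ∈ (s.erase ν₀).erase ν₁, (RatFunc.X - RatFunc.C (c ν)) with hPd
            have e1 : (B * P)⁻¹ = A * (A * (B * P))⁻¹ := by
              rw [eq_comm, mul_inv, mul_inv_cancel_left₀ hXb]
            have e2 : (A * P)⁻¹ = B * (A * (B * P))⁻¹ := by
              rw [eq_comm, show A * (B * P) = B * (A * P) by ring, mul_inv,
                mul_inv_cancel_left₀ hXa]
            rw [e1, e2, ← sub_mul]
            have hAB : A - B = RatFunc.C (c ν₁ - c ν₀) := by rw [map_sub, hA, hB]; ring
            rw [hAB, inv_mul_cancel_left₀ hCab]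
          rw [key]
          rw [Finset.sum_congr rfl (fun a _ => by rw [resAt_smul, resAt_sub]),
            ← Finset.mul_sum, Finset.sum_sub_distrib]
          have hpos : 0 < s.card := Finset.card_pos.mpr ⟨ν₀, hν₀⟩
          have hcard2 : 2 ≤ s.card := by omega
          have hc0 : (s.erase ν₀).card = s.card - 1 := Finset.card_erase_of_mem hν₀
          have hc1 : (s.erase ν₁).card = s.card - 1 := Finset.card_erase_of_mem hν₁
          have hne0 : (s.erase ν₀).Nonempty := Finset.card_pos.mp (by omega)
          have hne1' : (s.erase ν₁).Nonempty := Finset.card_pos.mp (by omega)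
          rw [ih _ (by omega) _ hc0 hne0, ih _ (by omega) _ hc1 hne1', hc0, hc1]
          simp
  exact H s.card s rfl hs

lemma algebraMap_stdPolyBasis (l : ℕ) (c : Fin (l + 1) → ℂ) (j : Fin (l + 1)) :
    algebraMap ℂ[X] (RatFunc ℂ) (stdPolyBasis l c j)
      = ∏ ν ∈ Finset.Iio j, (RatFunc.X - RatFunc.C (c ν)) := by
  rw [stdPolyBasis, map_prod]
  exact Finset.prod_congr rfl fun ν _ => by
    rw [map_sub, RatFunc.algebraMap_X, RatFunc.algebraMap_C]

lemma pairing_basis (l : ℕ) (c : Fin (l + 1) → ℂ) (j j' : Fin (l + 1)) :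
    pairingRes l c (stdPolyBasis l c j) (stdFracBasis l c j')
      = if j = j' then 1 else 0 := by
  classical
  rw [pairingRes]
  by_cases hle : j ≤ j'
  · have hsub : Finset.Iio j ⊆ Finset.Iic j' := fun ν hν =>
      Finset.mem_Iic.mpr (le_trans (le_of_lt (Finset.mem_Iio.mp hν)) hle)
    have hsd : Finset.Iic j' \ Finset.Iio j = Finset.Icc j j' := by
      ext ν
      simp only [Finset.mem_sdiff, Finset.mem_Icc, Finset.mem_Iic, Finset.mem_Iio, not_lt]
      tauto
    have hprod : (∏ ν ∈ Finset.Iic j', (RatFunc.X - RatFunc.C (c ν)))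
        = (∏ ν ∈ Finset.Iio j, (RatFunc.X - RatFunc.C (c ν)))
          * ∏ ν ∈ Finset.Icc j j', (RatFunc.X - RatFunc.C (c ν)) := by
      rw [← hsd, mul_comm, Finset.prod_sdiff hsub]
    have hkey : algebraMap ℂ[X] (RatFunc ℂ) (stdPolyBasis l c j) * stdFracBasis l c j'
        = (∏ ν ∈ Finset.Icc j j', (RatFunc.X - RatFunc.C (c ν)))⁻¹ := by
      rw [algebraMap_stdPolyBasis, stdFracBasis, one_div, hprod, mul_inv,
        mul_inv_cancel_left₀ (prod_X_sub_C_ne_zero' c _)]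
    rw [Finset.sum_congr rfl fun a _ => by rw [hkey]]
    rw [sum_res c _ ⟨j, Finset.mem_Icc.mpr ⟨le_refl j, hle⟩⟩]
    by_cases hjj : j = j'
    · subst hjj
      rw [if_pos rfl, if_pos (by rw [Finset.Icc_self, Finset.card_singleton])]
    · rw [if_neg hjj, if_neg]
      intro h1
      obtain ⟨x, hx⟩ := Finset.card_eq_one.mp h1
      have hj : j ∈ Finset.Icc j j' := Finset.mem_Icc.mpr ⟨le_refl j, hle⟩
      have hj' : j' ∈ Finset.Icc j j' := Finset.mem_Icc.mpr ⟨hle, le_refl j'⟩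
      rw [hx, Finset.mem_singleton] at hj hj'
      exact hjj (hj.trans hj'.symm)
  · push_neg at hle
    have hsub : Finset.Iic j' ⊆ Finset.Iio j := fun ν hν =>
      Finset.mem_Iio.mpr (lt_of_le_of_lt (Finset.mem_Iic.mp hν) hle)
    have hprod : (∏ ν ∈ Finset.Iio j, (RatFunc.X - RatFunc.C (c ν)))
        = (∏ ν ∈ Finset.Iio j \ Finset.Iic j', (RatFunc.X - RatFunc.C (c ν)))
          * ∏ ν ∈ Finset.Iic j', (RatFunc.X - RatFunc.C (c ν)) :=
      (Finset.prod_sdiff hsub).symm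
    have hkey : algebraMap ℂ[X] (RatFunc ℂ) (stdPolyBasis l c j) * stdFracBasis l c j'
        = algebraMap ℂ[X] (RatFunc ℂ)
            (∏ ν ∈ Finset.Iio j \ Finset.Iic j', (Polynomial.X - Polynomial.C (c ν))) := by
      rw [algebraMap_stdPolyBasis, stdFracBasis, one_div, hprod,
        mul_inv_cancel_right₀ (prod_X_sub_C_ne_zero' c _), map_prod]
      exact (Finset.prod_congr rfl fun ν _ => by
        rw [map_sub, RatFunc.algebraMap_X, RatFunc.algebraMap_C]).symm
    rw [Finset.sum_congr rfl fun a _ => by rw [hkey, resAt_algebraMap],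
      Finset.sum_const_zero, if_neg (fun h => absurd h.le (not_le.mpr hle))]
    -- j = j' → j ≤ j' contradiction with j' < j

lemma pairingRes_sum_left (l : ℕ) (c : Fin (l + 1) → ℂ) (x : Fin (l + 1) → ℂ)
    (g : RatFunc ℂ) :
    pairingRes l c (∑ j, Polynomial.C (x j) * stdPolyBasis l c j) g
      = ∑ j, x j * pairingRes l c (stdPolyBasis l c j) g := by
  unfold pairingRes
  have h : ∀ a, resAt a (algebraMap ℂ[X] (RatFunc ℂ)
        (∑ j, Polynomial.C (x j) * stdPolyBasis l c j) * g)
      = ∑ j, x j * resAt a (algebraMap ℂ[X] (RatFunc ℂ) (stdPolyBasis l c j) * g) := by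
    intro a
    rw [map_sum, Finset.sum_mul, resAt_sum]
    exact Finset.sum_congr rfl fun j _ => by
      rw [map_mul, RatFunc.algebraMap_C, ← RatFunc.smul_eq_C_mul, smul_mul_assoc, resAt_smul]
  rw [Finset.sum_congr rfl fun a _ => h a, Finset.sum_comm]
  exact Finset.sum_congr rfl fun j _ => (Finset.mul_sum _ _ _).symm

lemma pairingRes_sum_right (l : ℕ) (c : Fin (l + 1) → ℂ) (p : ℂ[X])
    (y : Fin (l + 1) → ℂ) :
    pairingRes l c p (∑ j', y j' • stdFracBasis l c j')
      = ∑ j', y j' * pairingRes l c p (stdFracBasis l c j') := by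
  unfold pairingRes
  have h : ∀ a, resAt a (algebraMap ℂ[X] (RatFunc ℂ) p * ∑ j', y j' • stdFracBasis l c j')
      = ∑ j', y j' * resAt a (algebraMap ℂ[X] (RatFunc ℂ) p * stdFracBasis l c j') := by
    intro a
    rw [Finset.mul_sum, resAt_sum]
    exact Finset.sum_congr rfl fun j' _ => by rw [mul_smul_comm, resAt_smul]
  rw [Finset.sum_congr rfl fun a _ => h a, Finset.sum_comm]
  exact Finset.sum_congr rfl fun j' _ => (Finset.mul_sum _ _ _).symm

lemma stdPolyBasis_monic (l : ℕ) (c : Fin (l + 1) → ℂ) (j : Fin (l + 1)) :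
    (stdPolyBasis l c j).Monic :=
  monic_prod_of_monic _ _ fun ν _ => monic_X_sub_C (c ν)

lemma stdPolyBasis_natDegree (l : ℕ) (c : Fin (l + 1) → ℂ) (j : Fin (l + 1)) :
    (stdPolyBasis l c j).natDegree = (j : ℕ) := by
  rw [stdPolyBasis, Polynomial.natDegree_prod _ _ fun ν _ => X_sub_C_ne_zero (c ν)]
  simp [Polynomial.natDegree_X_sub_C]

lemma stdPolyBasis_degree (l : ℕ) (c : Fin (l + 1) → ℂ) (j : Fin (l + 1)) :
    (stdPolyBasis l c j).degree = ((j : ℕ) : WithBot ℕ) := by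
  rw [Polynomial.degree_eq_natDegree (stdPolyBasis_monic l c j).ne_zero,
    stdPolyBasis_natDegree]

lemma expand_std (l : ℕ) (c : Fin (l + 1) → ℂ) :
    ∀ n : ℕ, n ≤ l + 1 → ∀ p : ℂ[X], p.degree < (n : ℕ) →
      ∃ x : Fin (l + 1) → ℂ, p = ∑ j, Polynomial.C (x j) * stdPolyBasis l c j := by
  intro n
  induction n with
  | zero =>
    intro _ p hp
    refine ⟨0, ?_⟩
    have : p = 0 := by
      by_contra h
      rw [Polynomial.degree_eq_natDegree h] at hp
      exact absurd hp (by exact_mod_cast Nat.not_lt_zero _)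
    simp [this]
  | succ n ih =>
    intro hn p hp
    have hnl : n ≤ l := by omega
    set jn : Fin (l + 1) := ⟨n, by omega⟩ with hjn
    set k := p.coeff n with hk
    set q := p - Polynomial.C k * stdPolyBasis l c jn with hq
    have hBdeg : (stdPolyBasis l c jn).degree = (n : WithBot ℕ) := by
      rw [stdPolyBasis_degree]
    have hval : ((jn : Fin (l + 1)) : ℕ) = n := rfl
    have hqdeg : q.degree < (n : ℕ) := by
      rw [Polynomial.degree_lt_iff_coeff_zero]
      intro m hm
      rw [hq, Polynomial.coeff_sub, Polynomial.coeff_C_mul]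
      have hpm : p.coeff m = if m = n then k else 0 := by
        rcases eq_or_lt_of_le hm with h | h
        · rw [if_pos h.symm, hk, h]
        · rw [if_neg (by omega)]
          exact Polynomial.coeff_eq_zero_of_degree_lt
            (lt_of_lt_of_le hp (by exact_mod_cast h))
      have hBm : (stdPolyBasis l c jn).coeff m = if m = n then 1 else 0 := by
        rcases eq_or_lt_of_le hm with h | h
        · rw [if_pos h.symm, ← h]
          have h1 := (stdPolyBasis_monic l c jn).coeff_natDegree
          rwa [stdPolyBasis_natDegree, hval] at h1
        · rw [if_neg (by omega)]
          exact Polynomial.coeff_eq_zero_of_degree_lt (by rw [hBdeg]; exact_mod_cast h)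
      rw [hpm, hBm]
      by_cases h : m = n <;> simp [h]
    obtain ⟨x, hx⟩ := ih (by omega) q hqdeg
    refine ⟨x + (Pi.single jn k : Fin (l + 1) → ℂ), ?_⟩
    have hsingle : ∑ j, Polynomial.C ((Pi.single jn k : Fin (l + 1) → ℂ) j) * stdPolyBasis l c j
        = Polynomial.C k * stdPolyBasis l c jn := by
      rw [Finset.sum_eq_single jn]
      · rw [Pi.single_eq_same]
      · intro b _ hb
        rw [Pi.single_eq_of_ne hb, map_zero, zero_mul]
      · intro h
        exact absurd (Finset.mem_univ jn) h
    calc p = q + Polynomial.C k * stdPolyBasis l c jn := by rw [hq]; ring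
    _ = ∑ j, Polynomial.C ((x + (Pi.single jn k : Fin (l + 1) → ℂ)) j) * stdPolyBasis l c j := by
        rw [hx, ← hsingle, ← Finset.sum_add_distrib]
        exact Finset.sum_congr rfl fun j _ => by rw [Pi.add_apply, map_add, add_mul]


/-- Proposition `prop:nondeg`.
The residue pairing between `ℂ[z]/⟨∏_{i=0}^{l}(z-c_i)⟩` (represented by polynomials of
degree ≤ l) and the space `L` spanned by `1/∏_{ν=0}^{i}(z-c_ν)`, `i = 0,…,l`, is
non-degenerate; moreover the bases `{∏_{ν=0}^{j-1}(z-c_ν)}_j` and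
`{1/∏_{ν=0}^{j'}(z-c_ν)}_{j'}` are dual bases: `⟨∏_{ν<j}(z-c_ν), 1/∏_{ν≤j'}(z-c_ν)⟩ = δ_{j,j'}`. -/
theorem residue_pairing_nondegenerate_dualBases (l : ℕ) (c : Fin (l + 1) → ℂ) :
    (∀ j j' : Fin (l + 1),
        pairingRes l c (stdPolyBasis l c j) (stdFracBasis l c j')
          = if j = j' then 1 else 0)
    ∧ (∀ p : Polynomial ℂ, p.degree ≤ (l : ℕ) →
        (∀ y : Fin (l + 1) → ℂ,
          pairingRes l c p (∑ j', y j' • stdFracBasis l c j') = 0) → p = 0)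
    ∧ (∀ y : Fin (l + 1) → ℂ,
        (∀ p : Polynomial ℂ, p.degree ≤ (l : ℕ) →
          pairingRes l c p (∑ j', y j' • stdFracBasis l c j') = 0) → y = 0) := by
  classical
  refine ⟨pairing_basis l c, ?_, ?_⟩
  · intro p hdeg h
    have hfr : ∀ j', pairingRes l c p (stdFracBasis l c j') = 0 := by
      intro j'
      have hy := h (Pi.single j' 1)
      have hsum : (∑ k, (Pi.single j' (1 : ℂ) : Fin (l + 1) → ℂ) k • stdFracBasis l c k)
          = stdFracBasis l c j' := by
        rw [Finset.sum_eq_single j']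
        · rw [Pi.single_eq_same, one_smul]
        · intro b _ hb
          rw [Pi.single_eq_of_ne hb, zero_smul]
        · intro hmem
          exact absurd (Finset.mem_univ j') hmem
      rwa [hsum] at hy
    obtain ⟨x, hx⟩ := expand_std l c (l + 1) le_rfl p
      (lt_of_le_of_lt hdeg (by exact_mod_cast Nat.lt_succ_self l))
    have hx0 : ∀ j', x j' = 0 := by
      intro j'
      have hz := hfr j'
      rw [hx, pairingRes_sum_left,
        Finset.sum_congr rfl (fun j _ => by rw [pairing_basis])] at hz
      simp only [mul_ite, mul_one, mul_zero] at hz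
      rwa [Finset.sum_ite_eq' Finset.univ j' x, if_pos (Finset.mem_univ j')] at hz
    rw [hx, Finset.sum_congr rfl fun j _ => by rw [hx0 j, map_zero, zero_mul]]
    exact Finset.sum_const_zero
  · intro y h
    funext j
    have hjl : (j : ℕ) ≤ l := Nat.lt_succ_iff.mp j.isLt
    have hdeg : (stdPolyBasis l c j).degree ≤ (l : ℕ) := by
      rw [stdPolyBasis_degree]
      exact_mod_cast hjl
    have hz := h (stdPolyBasis l c j) hdeg
    rw [pairingRes_sum_right,
      Finset.sum_congr rfl (fun j' _ => by rw [pairing_basis])] at hz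
    simp only [mul_ite, mul_one, mul_zero] at hz
    rwa [Finset.sum_ite_eq Finset.univ j y, if_pos (Finset.mem_univ j)] at hz
end

section
/- Let X = (X_1,...,X_n) ∈ 𝔤^n for 𝔤 the Lie algebra of a connected reductive complex group G. Then the set of irreducible tuples — those not contained in any proper parabolic subalgebra of 𝔤 — is Zariski open in 𝔤^n. -/
open Matrix

/-- A tuple `X = (X_1,…,X_d)` in `𝔤 = 𝔤𝔩_n(ℂ)` is *irreducible* if no proper parabolic
subalgebra of `𝔤𝔩_n` contains all the `X_i`; since the proper parabolic subalgebras of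
`𝔤𝔩_n` are the stabilizers of (nonempty) flags of proper nonzero subspaces of `ℂ^n`,
this means that the `X_i` have no common invariant subspace `0 ≠ V ⊊ ℂ^n`. -/
def IsIrreducibleTuple (n d : ℕ) (X : Fin d → Matrix (Fin n) (Fin n) ℂ) : Prop :=
  ¬ ∃ V : Submodule ℂ (Fin n → ℂ), V ≠ ⊥ ∧ V ≠ ⊤ ∧
      ∀ (i : Fin d), ∀ v ∈ V, (X i).mulVec v ∈ V

/-- A subset of `𝔤𝔩_n(ℂ)^d` is *Zariski closed* iff it is the common zero locus of a
set of polynomial functions of the matrix entries; a subset is *Zariski open* iff its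
complement is Zariski closed. -/
def IsZariskiClosed (n d : ℕ) (S : Set (Fin d → Matrix (Fin n) (Fin n) ℂ)) : Prop :=
  ∃ T : Set (MvPolynomial (Fin d × Fin n × Fin n) ℂ),
    S = {Y | ∀ f ∈ T, MvPolynomial.aeval (fun q => Y q.1 q.2.1 q.2.2) f = 0}

namespace IrredAux

noncomputable section

variable {n d : ℕ}

def mulVecL (n : ℕ) (u : Fin n → ℂ) : Matrix (Fin n) (Fin n) ℂ →ₗ[ℂ] (Fin n → ℂ) where
  toFun M := M.mulVec u
  map_add' M N := Matrix.add_mulVec M N u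
  map_smul' c M := Matrix.smul_mulVec c M u

@[simp] lemma mulVecL_apply (u : Fin n → ℂ) (M : Matrix (Fin n) (Fin n) ℂ) :
    mulVecL n u M = M.mulVec u := rfl

variable (X : Fin d → Matrix (Fin n) (Fin n) ℂ)

def Tsub (v : Fin n → (Fin n → ℂ)) (s : Finset (Fin n)) :
    Submodule ℂ (Matrix (Fin n) (Fin n) ℂ) :=
  Subalgebra.toSubmodule (Algebra.adjoin ℂ (Set.range X)) ⊓
    ⨅ i ∈ s, LinearMap.ker (mulVecL n (v i))

lemma mem_Tsub {v : Fin n → (Fin n → ℂ)} {s : Finset (Fin n)} {M : Matrix (Fin n) (Fin n) ℂ} :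
    M ∈ Tsub X v s ↔ M ∈ Algebra.adjoin ℂ (Set.range X) ∧ ∀ i ∈ s, M.mulVec (v i) = 0 := by
  simp [Tsub, Submodule.mem_iInf, LinearMap.mem_ker]

lemma mul_mem_Tsub {v : Fin n → (Fin n → ℂ)} {s : Finset (Fin n)} {M : Matrix (Fin n) (Fin n) ℂ}
    (k : Fin d) (hM : M ∈ Tsub X v s) : X k * M ∈ Tsub X v s := by
  rw [mem_Tsub] at hM ⊢
  refine ⟨mul_mem (Algebra.subset_adjoin ⟨k, rfl⟩) hM.1, fun i hi => ?_⟩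
  rw [← Matrix.mulVec_mulVec, hM.2 i hi, Matrix.mulVec_zero]

/-- If some element of `Tsub` does not kill `u`, then `Tsub *ᵥ u` is everything. -/
lemma orbit_top (hirr : IsIrreducibleTuple n d X) (v : Fin n → (Fin n → ℂ))
    (s : Finset (Fin n)) (u : Fin n → ℂ)
    (h : ∃ M ∈ Tsub X v s, M.mulVec u ≠ 0) :
    ∀ w, ∃ M ∈ Tsub X v s, M.mulVec u = w := by
  set Mu : Submodule ℂ (Fin n → ℂ) := (Tsub X v s).map (mulVecL n u) with hMu
  have hinv : ∀ (i : Fin d), ∀ x ∈ Mu, (X i).mulVec x ∈ Mu := by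
    rintro i x ⟨M, hM, rfl⟩
    exact ⟨X i * M, mul_mem_Tsub X i hM, by simp [Matrix.mulVec_mulVec]⟩
  have hbot : Mu ≠ ⊥ := by
    obtain ⟨M, hM, hMne⟩ := h
    intro hb
    exact hMne ((Submodule.eq_bot_iff _).1 hb _ ⟨M, hM, rfl⟩)
  have htop : Mu = ⊤ := by
    by_contra hne
    exact hirr ⟨Mu, hbot, hne, hinv⟩
  intro w
  have : w ∈ Mu := htop ▸ Submodule.mem_top
  obtain ⟨M, hM, hMw⟩ := this
  exact ⟨M, hM, hMw⟩

lemma key (hn : 0 < n) (hirr : IsIrreducibleTuple n d X) (v : Fin n → (Fin n → ℂ))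
    (s : Finset (Fin n)) :
    ∀ u, u ∉ Submodule.span ℂ (v '' ↑s) → ∀ w, ∃ M ∈ Tsub X v s, M.mulVec u = w := by
  classical
  induction s using Finset.induction_on with
  | empty =>
    intro u hu w
    have hu0 : u ≠ 0 := by
      intro h; apply hu; simp [h]
    refine orbit_top X hirr v ∅ u ⟨1, ?_, by simpa [Matrix.one_mulVec] using hu0⟩ w
    rw [mem_Tsub]
    exact ⟨one_mem _, by simp⟩
  | @insert j s' hj ih =>
    intro u hu w
    have hmono : Submodule.span ℂ (v '' ↑s') ≤ Submodule.span ℂ (v '' ↑(insert j s')) := by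
      apply Submodule.span_mono
      apply Set.image_mono
      simp [Finset.coe_insert, Set.subset_insert]
    by_cases hvj : v j ∈ Submodule.span ℂ (v '' ↑s')
    · -- killing s' automatically kills v j
      have hu' : u ∉ Submodule.span ℂ (v '' ↑s') := fun h => hu (hmono h)
      obtain ⟨M, hM, hMw⟩ := ih u hu' w
      rw [mem_Tsub] at hM
      have hkill : M.mulVec (v j) = 0 := by
        have hle : Submodule.span ℂ (v '' ↑s') ≤ LinearMap.ker M.mulVecLin := by
          rw [Submodule.span_le]
          rintro x ⟨i, hi, rfl⟩
          simp [LinearMap.mem_ker, Matrix.mulVecLin_apply, hM.2 i hi]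
        simpa [LinearMap.mem_ker, Matrix.mulVecLin_apply] using hle hvj
      refine ⟨M, ?_, hMw⟩
      rw [mem_Tsub]
      refine ⟨hM.1, fun i hi => ?_⟩
      rcases Finset.mem_insert.1 hi with rfl | hi
      · exact hkill
      · exact hM.2 i hi
    · by_cases hMu : ∃ M ∈ Tsub X v (insert j s'), M.mulVec u ≠ 0
      · exact orbit_top X hirr v (insert j s') u hMu w
      · exfalso
        push_neg at hMu
        -- every element of Tsub s' killing v j kills u
        have hker : ∀ M ∈ Tsub X v s', M.mulVec (v j) = 0 → M.mulVec u = 0 := by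
          intro M hM h0
          apply hMu M
          rw [mem_Tsub] at hM ⊢
          refine ⟨hM.1, fun i hi => ?_⟩
          rcases Finset.mem_insert.1 hi with rfl | hi
          · exact h0
          · exact hM.2 i hi
        have hdiff : ∀ M N, M ∈ Tsub X v s' → N ∈ Tsub X v s' →
            M.mulVec (v j) = N.mulVec (v j) → M.mulVec u = N.mulVec u := by
          intro M N hM hN h
          have := hker (M - N) (sub_mem hM hN)
            (by rw [Matrix.sub_mulVec, h, sub_self])
          rw [Matrix.sub_mulVec, sub_eq_zero] at this
          exact this
        -- a (nonlinear) section producing elements of Tsub s' with prescribed value on v j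
        choose σ hσ1 hσ2 using fun x => ih (v j) hvj x
        set f : (Fin n → ℂ) →ₗ[ℂ] (Fin n → ℂ) :=
          { toFun := fun x => (σ x).mulVec u
            map_add' := fun x y => by
              show σ (x + y) *ᵥ u = σ x *ᵥ u + σ y *ᵥ u
              have := hdiff (σ (x + y)) (σ x + σ y) (hσ1 _) (add_mem (hσ1 _) (hσ1 _))
                (by rw [Matrix.add_mulVec, hσ2, hσ2, hσ2])
              rw [this, Matrix.add_mulVec]
            map_smul' := fun c x => by
              show σ (c • x) *ᵥ u = (RingHom.id ℂ) c • (σ x *ᵥ u)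
              have := hdiff (σ (c • x)) (c • σ x) (hσ1 _)
                (Submodule.smul_mem _ c (hσ1 _))
                (by rw [Matrix.smul_mulVec, hσ2, hσ2])
              rw [this, Matrix.smul_mulVec]
              rfl } with hf_def
        have hf : ∀ M ∈ Tsub X v s', f (M.mulVec (v j)) = M.mulVec u := by
          intro M hM
          exact hdiff (σ _) M (hσ1 _) hM (hσ2 _)
        have hcomm : ∀ (k : Fin d) (x : Fin n → ℂ),
            f ((X k).mulVec x) = (X k).mulVec (f x) := by
          intro k x
          have hx : (X k).mulVec x = (X k * σ x).mulVec (v j) := by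
            rw [← Matrix.mulVec_mulVec, hσ2]
          rw [hx, hf _ (mul_mem_Tsub X k (hσ1 x)), ← Matrix.mulVec_mulVec]
          rfl
        -- Schur: f is a scalar
        have : Nontrivial (Fin n → ℂ) := by
          refine ⟨Pi.single ⟨0, hn⟩ 1, 0, ?_⟩
          intro h
          have := congrFun h ⟨0, hn⟩
          simp [Pi.single_eq_same] at this
        obtain ⟨μ, hμ⟩ := Module.End.exists_eigenvalue (f : Module.End ℂ (Fin n → ℂ))
        have htopE : Module.End.eigenspace (f : Module.End ℂ (Fin n → ℂ)) μ = ⊤ := by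
          by_contra hne
          refine hirr ⟨_, hμ, hne, fun k x hx => ?_⟩
          rw [Module.End.mem_eigenspace_iff] at hx ⊢
          rw [hcomm k x, hx, Matrix.mulVec_smul]
        have hall : ∀ x, f x = μ • x := fun x =>
          Module.End.mem_eigenspace_iff.1 (htopE ▸ Submodule.mem_top)
        have hcon : ∀ M ∈ Tsub X v s', M.mulVec (u - μ • v j) = 0 := by
          intro M hM
          have h1 : M.mulVec u = μ • M.mulVec (v j) := by
            rw [← hf M hM, hall]
          rw [Matrix.mulVec_sub, Matrix.mulVec_smul, h1, sub_self]
        have hu' : u - μ • v j ∈ Submodule.span ℂ (v '' ↑s') := by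
          by_contra hns
          obtain ⟨M, hM, hMe⟩ := ih _ hns (Pi.single ⟨0, hn⟩ 1)
          rw [hcon M hM] at hMe
          have := congrFun hMe ⟨0, hn⟩
          simp [Pi.single_eq_same] at this
        apply hu
        have hju : v j ∈ Submodule.span ℂ (v '' ↑(insert j s')) :=
          Submodule.subset_span ⟨j, by simp, rfl⟩
        have : u = (u - μ • v j) + μ • v j := by ring_nf
        rw [this]
        exact Submodule.add_mem _ (hmono hu') (Submodule.smul_mem _ _ hju)


/-- **Burnside**: an irreducible tuple generates the full matrix algebra. -/
lemma burnside (hn : 0 < n) (hirr : IsIrreducibleTuple n d X) (g : Matrix (Fin n) (Fin n) ℂ) :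
    g ∈ Algebra.adjoin ℂ (Set.range X) := by
  classical
  set v : Fin n → (Fin n → ℂ) := fun i => Pi.single i 1 with hv
  have hli : LinearIndependent ℂ v := by
    have := (Pi.basisFun ℂ (Fin n)).linearIndependent
    have he : ⇑(Pi.basisFun ℂ (Fin n)) = v := funext fun i => Pi.basisFun_apply ℂ (Fin n) i
    rwa [he] at this
  have hkey : ∀ j : Fin n, ∃ M ∈ Tsub X v (Finset.univ.erase j),
      M.mulVec (v j) = g.mulVec (v j) := by
    intro j
    refine key X hn hirr v (Finset.univ.erase j) (v j) ?_ _
    exact hli.notMem_span_image (by simp)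
  choose a ha h0 using hkey
  have hsum : (∑ j, a j) ∈ Algebra.adjoin ℂ (Set.range X) :=
    sum_mem fun j _ => ((mem_Tsub X).1 (ha j)).1
  have heq : (∑ j, a j) = g := by
    ext i k
    have h1 : (∑ j, a j).mulVec (v k) = g.mulVec (v k) := by
      have h2 : (∑ j, a j).mulVec (v k) = ∑ j, (a j).mulVec (v k) :=
        map_sum (mulVecL n (v k)) a Finset.univ
      rw [h2, Finset.sum_eq_single k]
      · exact h0 k
      · intro j _ hjk
        exact ((mem_Tsub X).1 (ha j)).2 k (Finset.mem_erase.2 ⟨hjk.symm, Finset.mem_univ _⟩)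
      · simp
    have h3 := congrFun h1 i
    simpa [hv, Matrix.mulVec_single] using h3
  exact heq ▸ hsum



def wordProd (X : Fin d → Matrix (Fin n) (Fin n) ℂ) (l : List (Fin d)) :
    Matrix (Fin n) (Fin n) ℂ :=
  (l.map X).prod

lemma span_wordProd (X : Fin d → Matrix (Fin n) (Fin n) ℂ) :
    Submodule.span ℂ (Set.range (wordProd X)) =
      Subalgebra.toSubmodule (Algebra.adjoin ℂ (Set.range X)) := by
  rw [Algebra.adjoin_eq_span]
  congr 1
  ext M
  constructor
  · rintro ⟨l, rfl⟩
    induction l with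
    | nil => exact one_mem _
    | cons i l ih =>
      have : wordProd X (i :: l) = X i * wordProd X l := by
        simp [wordProd, List.map_cons, List.prod_cons]
      rw [this]
      exact mul_mem (Submonoid.subset_closure ⟨i, rfl⟩) ih
  · intro hM
    induction hM using Submonoid.closure_induction with
    | mem x hx =>
      obtain ⟨i, rfl⟩ := hx
      exact ⟨[i], by simp [wordProd]⟩
    | one => exact ⟨[], by simp [wordProd]⟩
    | mul x y _ _ hx hy =>
      obtain ⟨l1, rfl⟩ := hx
      obtain ⟨l2, rfl⟩ := hy
      exact ⟨l1 ++ l2, by simp [wordProd]⟩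

/-- The generic matrix whose entries are polynomial variables. -/
def gen (n d : ℕ) (i : Fin d) : Matrix (Fin n) (Fin n) (MvPolynomial (Fin d × Fin n × Fin n) ℂ) :=
  Matrix.of fun a b => MvPolynomial.X (i, a, b)

/-- The matrix of generic words: row `r` consists of the entries of the word `W r`
in the generic matrices. -/
def wordPolyMat (n d : ℕ) (W : Fin n × Fin n → List (Fin d)) :
    Matrix (Fin n × Fin n) (Fin n × Fin n) (MvPolynomial (Fin d × Fin n × Fin n) ℂ) :=
  Matrix.of fun r c => (((W r).map (gen n d)).prod) c.1 c.2

def evalHom (Y : Fin d → Matrix (Fin n) (Fin n) ℂ) :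
    MvPolynomial (Fin d × Fin n × Fin n) ℂ →+* ℂ :=
  (MvPolynomial.aeval fun q : Fin d × Fin n × Fin n => Y q.1 q.2.1 q.2.2).toRingHom

lemma evalHom_word (Y : Fin d → Matrix (Fin n) (Fin n) ℂ) (l : List (Fin d)) :
    (l.map (gen n d)).prod.map (evalHom Y) = wordProd Y l := by
  induction l with
  | nil => simp [wordProd, Matrix.map_one]
  | cons i t ih =>
    have h1 : ((i :: t).map (gen n d)).prod = gen n d i * (t.map (gen n d)).prod := by
      simp
    have h2 : wordProd Y (i :: t) = Y i * wordProd Y t := by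
      simp [wordProd]
    rw [h1, h2, Matrix.map_mul, ih]
    congr 1
    ext a b
    simp [gen, evalHom]

/-- The evaluation of the generic word matrix. -/
lemma evalHom_wordPolyMat (Y : Fin d → Matrix (Fin n) (Fin n) ℂ)
    (W : Fin n × Fin n → List (Fin d)) :
    (wordPolyMat n d W).map (evalHom Y) =
      Matrix.of fun r c => wordProd Y (W r) c.1 c.2 := by
  ext r c
  have := congrFun (congrFun (evalHom_word Y (W r)) c.1) c.2
  simpa [wordPolyMat, Matrix.map_apply] using this

/-- The matrix of rows of entries of word products. -/
def rowMat (Y : Fin d → Matrix (Fin n) (Fin n) ℂ) (W : Fin n × Fin n → List (Fin d)) :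
    Matrix (Fin n × Fin n) (Fin n × Fin n) ℂ :=
  Matrix.of fun r c => wordProd Y (W r) c.1 c.2

lemma wordProd_mem (Y : Fin d → Matrix (Fin n) (Fin n) ℂ) (V : Submodule ℂ (Fin n → ℂ))
    (hinv : ∀ (i : Fin d), ∀ v ∈ V, (Y i).mulVec v ∈ V) (l : List (Fin d)) :
    ∀ x ∈ V, (wordProd Y l).mulVec x ∈ V := by
  induction l with
  | nil => intro x hx; simpa [wordProd, Matrix.one_mulVec] using hx
  | cons i t ih =>
    intro x hx
    have h1 : wordProd Y (i :: t) = Y i * wordProd Y t := by simp [wordProd]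
    rw [h1, ← Matrix.mulVec_mulVec]
    exact hinv i _ (ih x hx)

lemma det_eq_zero_of_reducible (Y : Fin d → Matrix (Fin n) (Fin n) ℂ)
    (hV : ∃ V : Submodule ℂ (Fin n → ℂ), V ≠ ⊥ ∧ V ≠ ⊤ ∧
      ∀ (i : Fin d), ∀ v ∈ V, (Y i).mulVec v ∈ V)
    (W : Fin n × Fin n → List (Fin d)) : (rowMat Y W).det = 0 := by
  classical
  obtain ⟨V, hVb, hVt, hinv⟩ := hV
  by_contra hdet
  have hU : IsUnit (rowMat Y W) := (Matrix.isUnit_iff_isUnit_det _).2 (isUnit_iff_ne_zero.2 hdet)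
  have hli : LinearIndependent ℂ (fun r => rowMat Y W r) :=
    Matrix.linearIndependent_rows_iff_isUnit.2 hU
  have hspan : Submodule.span ℂ (Set.range fun r => rowMat Y W r) = ⊤ :=
    hli.span_eq_top_of_card_eq_finrank'
      (by simp [Module.finrank_fintype_fun_eq_card])
  -- the submodule of "matrices" (as rows) preserving V
  set P : Submodule ℂ (Fin n × Fin n → ℂ) :=
    { carrier := {ρ | ∀ x ∈ V, (Matrix.of fun a b => ρ (a, b)).mulVec x ∈ V}
      add_mem' := by
        intro ρ σ hρ hσ x hx
        have : (Matrix.of fun a b => (ρ + σ) (a, b)) =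
            (Matrix.of fun a b => ρ (a, b)) + (Matrix.of fun a b => σ (a, b)) := rfl
        rw [this, Matrix.add_mulVec]
        exact V.add_mem (hρ x hx) (hσ x hx)
      zero_mem' := by
        intro x hx
        have : (Matrix.of fun a b => (0 : Fin n × Fin n → ℂ) (a, b)) =
            (0 : Matrix (Fin n) (Fin n) ℂ) := rfl
        rw [this, Matrix.zero_mulVec]
        exact V.zero_mem
      smul_mem' := by
        intro c ρ hρ x hx
        have : (Matrix.of fun a b => (c • ρ) (a, b)) =
            c • (Matrix.of fun a b => ρ (a, b)) := rfl
        rw [this, Matrix.smul_mulVec]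
        exact V.smul_mem c (hρ x hx) } with hP
  have hrows : ∀ r, rowMat Y W r ∈ P := by
    intro r x hx
    exact wordProd_mem Y V hinv (W r) x hx
  have hPtop : P = ⊤ := by
    rw [← top_le_iff, ← hspan]
    rw [Submodule.span_le]
    rintro ρ ⟨r, rfl⟩
    exact hrows r
  -- now contradict: find a row moving V out
  obtain ⟨uu, huV, hu0⟩ := Submodule.exists_mem_ne_zero_of_ne_bot hVb
  obtain ⟨ww, hwV⟩ : ∃ w, w ∉ V := by
    by_contra hc
    push_neg at hc
    exact hVt (Submodule.eq_top_iff'.2 hc)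
  obtain ⟨k, hk⟩ : ∃ k, uu k ≠ 0 := by
    by_contra hc
    push_neg at hc
    exact hu0 (funext hc)
  set ρ : Fin n × Fin n → ℂ := fun c => if c.2 = k then (uu k)⁻¹ * ww c.1 else 0 with hρdef
  have hρP : ρ ∈ P := hPtop ▸ Submodule.mem_top
  have hmul : (Matrix.of fun a b => ρ (a, b)).mulVec uu = ww := by
    ext a
    simp only [Matrix.mulVec, dotProduct, Matrix.of_apply, hρdef]
    rw [Finset.sum_congr rfl (fun b _ => by
      rw [ite_mul, zero_mul] : ∀ b ∈ Finset.univ,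
        (if b = k then (uu k)⁻¹ * ww a else 0) * uu b =
          if b = k then (uu k)⁻¹ * ww a * uu b else 0)]
    rw [Finset.sum_ite_eq' Finset.univ k fun b => (uu k)⁻¹ * ww a * uu b]
    simp only [Finset.mem_univ, if_true]
    field_simp
  exact hwV (hmul ▸ hρP uu huV)

lemma reducible_of_det_eq_zero (Y : Fin d → Matrix (Fin n) (Fin n) ℂ)
    (h : ∀ W : Fin n × Fin n → List (Fin d), (rowMat Y W).det = 0) :
    ∃ V : Submodule ℂ (Fin n → ℂ), V ≠ ⊥ ∧ V ≠ ⊤ ∧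
      ∀ (i : Fin d), ∀ v ∈ V, (Y i).mulVec v ∈ V := by
  classical
  rcases Nat.eq_zero_or_pos n with hn | hn
  · exfalso
    subst hn
    have := h fun _ => []
    rw [Matrix.det_isEmpty] at this
    exact one_ne_zero this
  by_contra hred
  have hirr : IsIrreducibleTuple n d Y := hred
  have htop : Submodule.span ℂ (Set.range (wordProd Y)) = ⊤ := by
    rw [span_wordProd, eq_top_iff]
    intro M _
    exact burnside Y hn hirr M
  obtain ⟨b, hbsub, hbspan, hbli⟩ := exists_linearIndependent ℂ (Set.range (wordProd Y))
  rw [htop] at hbspan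
  have hbfin : b.Finite := hbli.setFinite
  haveI := hbfin.fintype
  have hbasis : Module.Basis b ℂ (Matrix (Fin n) (Fin n) ℂ) := Module.Basis.mk hbli (by rw [Subtype.range_coe]; exact hbspan.ge)
  have hcard : Fintype.card (Fin n × Fin n) = Fintype.card b := by
    have h1 := Module.finrank_eq_card_basis hbasis
    have h2 : Module.finrank ℂ (Matrix (Fin n) (Fin n) ℂ) = n * n := by
      rw [Module.finrank_matrix]
      simp
    rw [h2] at h1
    simp [← h1]
  let e := Fintype.equivOfCardEq hcard
  have hsel : ∀ x : b, ∃ l, wordProd Y l = (x : Matrix (Fin n) (Fin n) ℂ) :=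
    fun x => hbsub x.2
  choose L hL using hsel
  set W : Fin n × Fin n → List (Fin d) := fun r => L (e r) with hW
  have hg : LinearIndependent ℂ
      (fun r : Fin n × Fin n => ((e r : b) : Matrix (Fin n) (Fin n) ℂ)) :=
    hbli.comp e e.injective
  have hg' : LinearIndependent ℂ (fun r : Fin n × Fin n => wordProd Y (W r)) := by
    have : (fun r : Fin n × Fin n => wordProd Y (W r)) =
        fun r : Fin n × Fin n => ((e r : b) : Matrix (Fin n) (Fin n) ℂ) :=
      funext fun r => hL (e r)
    rw [this]
    exact hg
  set Ψ : Matrix (Fin n) (Fin n) ℂ →ₗ[ℂ] (Fin n × Fin n → ℂ) :=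
    { toFun := fun M => fun c => M c.1 c.2
      map_add' := fun M N => rfl
      map_smul' := fun c M => rfl } with hΨdef
  have hΨker : LinearMap.ker Ψ = ⊥ := by
    rw [LinearMap.ker_eq_bot]
    intro M N hMN
    ext a bb
    exact congrFun hMN (a, bb)
  have hrows : LinearIndependent ℂ (fun r => rowMat Y W r) := hg'.map' Ψ hΨker
  have hU := Matrix.linearIndependent_rows_iff_isUnit.1 hrows
  have hdet := (Matrix.isUnit_iff_isUnit_det _).1 hU
  exact isUnit_iff_ne_zero.1 hdet (h W)

end
end IrredAux

/-- The set of irreducible tuples — those not contained in any proper parabolic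
subalgebra of `𝔤𝔩_n` — is Zariski open in `𝔤^d`. -/
theorem irreducible_locus_zariski_open (n d : ℕ) :
    IsZariskiClosed n d {X | ¬ IsIrreducibleTuple n d X} := by
  classical
  refine ⟨Set.range fun W : Fin n × Fin n → List (Fin d) =>
    (IrredAux.wordPolyMat n d W).det, ?_⟩
  ext Y
  simp only [Set.mem_setOf_eq, Set.forall_mem_range]
  have heval : ∀ W : Fin n × Fin n → List (Fin d),
      MvPolynomial.aeval (fun q : Fin d × Fin n × Fin n => Y q.1 q.2.1 q.2.2)
        (IrredAux.wordPolyMat n d W).det = (IrredAux.rowMat Y W).det := by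
    intro W
    have h1 := (IrredAux.evalHom Y).map_det (IrredAux.wordPolyMat n d W)
    have h2 := IrredAux.evalHom_wordPolyMat Y W
    rw [RingHom.mapMatrix_apply, h2] at h1
    exact h1
  constructor
  · intro hred W
    rw [heval W]
    exact IrredAux.det_eq_zero_of_reducible Y (not_not.1 hred) W
  · intro hz
    have : ∀ W, (IrredAux.rowMat Y W).det = 0 := fun W => by rw [← heval W]; exact hz W
    intro hirr
    exact hirr (IrredAux.reducible_of_det_eq_zero Y this)
end

section
/- Let H dz = (H_k/z^k + ... + H_1/z + H_res) dz/z be an unramified canonical form for a connected reductive group G, with Levi subgroups L_i = {g ∈ G : Ad(g)H_j = H_j for all j ≥ i} (i = 1,...,k) determined by the spectral data. Then dim 𝕆_H = δ(H), where 𝕆_H is the orbit of H under the coadjoint action of G(ℂ[z]/⟨z^{k+1}⟩) on 𝔤(ℂ[z]/⟨z^{k+1}⟩)^* ≅ 𝔤 ⊗ (z^{-(k+1)}ℂ[[z]]/ℂ[[z]]), and δ(H) = dim G + Σ_{i=1}^{k}(dim G − dim L_i) − dim Stab_G(H). -/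
open Module Polynomial

attribute [local instance 100] LieRing.ofAssociativeRing

section AuxSS

variable {A : Type*} [Ring A] [Algebra ℂ A]

private lemma aux_lie_sum {L : Type*} [LieRing L] (x : L) (s : Finset ℕ) (f : ℕ → L) :
    ⁅x, ∑ i ∈ s, f i⁆ = ∑ i ∈ s, ⁅x, f i⁆ := by
  classical
  induction s using Finset.induction_on with
  | empty => simp
  | @insert a s h ih => simp [Finset.sum_insert h, lie_add, ih]

private lemma aux_aeval_mulLeft (a : A) (p : ℂ[X]) :
    aeval (LinearMap.mulLeft ℂ a) p = LinearMap.mulLeft ℂ (aeval a p) := by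
  induction p using Polynomial.induction_on' with
  | add p q hp hq =>
      rw [map_add, map_add, hp, hq]
      ext x
      simp [add_mul]
  | monomial n c =>
      rw [aeval_monomial, aeval_monomial]
      ext x
      simp [Module.End.mul_apply, Module.algebraMap_end_apply, LinearMap.pow_mulLeft,
        ← Algebra.smul_def, smul_mul_assoc]

private lemma aux_aeval_mulRight (a : A) (p : ℂ[X]) :
    aeval (LinearMap.mulRight ℂ a) p = LinearMap.mulRight ℂ (aeval a p) := by
  induction p using Polynomial.induction_on' with
  | add p q hp hq =>
      rw [map_add, map_add, hp, hq]
      ext x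
      simp [mul_add]
  | monomial n c =>
      rw [aeval_monomial, aeval_monomial]
      ext x
      simp [Module.End.mul_apply, Module.algebraMap_end_apply, LinearMap.pow_mulRight,
        ← Algebra.smul_def, mul_smul_comm, smul_mul_assoc]

end AuxSS

private lemma aux_ss_ad {N : ℕ} (C : Matrix (Fin N) (Fin N) ℂ)
    (h : Module.End.IsSemisimple (Matrix.mulVecLin C)) (Z : Matrix (Fin N) (Fin N) ℂ)
    (hZ : ⁅C, ⁅C, Z⁆⁆ = 0) : ⁅C, Z⁆ = 0 := by
  set f : Module.End ℂ (Matrix (Fin N) (Fin N) ℂ) :=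
    LinearMap.mulLeft ℂ C - LinearMap.mulRight ℂ C with hf
  have hfapp : ∀ Y, f Y = ⁅C, Y⁆ := by
    intro Y
    simp [hf, LinearMap.sub_apply, Ring.lie_def]
  have hCp : aeval C (minpoly ℂ (Matrix.mulVecLin C)) = 0 := by
    have he : (Matrix.toLinAlgEquiv' : Matrix (Fin N) (Fin N) ℂ ≃ₐ[ℂ] _) C
        = Matrix.mulVecLin C := by
      ext v
      simp
    have h2 : (Matrix.toLinAlgEquiv' : Matrix (Fin N) (Fin N) ℂ ≃ₐ[ℂ] _)
        (aeval C (minpoly ℂ (Matrix.mulVecLin C))) = 0 := by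
      rw [← Polynomial.aeval_algHom_apply, he, minpoly.aeval]
    exact (map_eq_zero_iff _
      (Matrix.toLinAlgEquiv' : Matrix (Fin N) (Fin N) ℂ ≃ₐ[ℂ] _).injective).mp h2
  have hL : Module.End.IsSemisimple (LinearMap.mulLeft ℂ C) :=
    Module.End.isSemisimple_of_squarefree_aeval_eq_zero h.minpoly_squarefree
      (by rw [aux_aeval_mulLeft, hCp, LinearMap.mulLeft_zero_eq_zero])
  have hR : Module.End.IsSemisimple (LinearMap.mulRight ℂ C) :=
    Module.End.isSemisimple_of_squarefree_aeval_eq_zero h.minpoly_squarefree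
      (by rw [aux_aeval_mulRight, hCp, LinearMap.mulRight_zero_eq_zero])
  have hss : f.IsSemisimple :=
    Module.End.IsSemisimple.sub_of_commute (LinearMap.commute_mulLeft_right C C) hL hR
  have hgen := (hss.isFinitelySemisimple.genEigenspace_eq_eigenspace 0 (k := (2 : ℕ∞))
    (by norm_num))
  have hmem : Z ∈ (f.genEigenspace 0) (2 : ℕ∞) := by
    rw [Module.End.mem_genEigenspace]
    refine ⟨2, le_rfl, ?_⟩
    rw [LinearMap.mem_ker]
    simp [zero_smul, sub_zero, pow_succ, Module.End.mul_apply, hfapp, hZ]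
  rw [hgen] at hmem
  have := Module.End.mem_eigenspace_iff.mp hmem
  rw [hfapp] at this
  simpa using this

private lemma aux_key {L : Type*} [LieRing L] (k : ℕ) (A X : ℕ → L)
    (hA : ∀ m, k < m → A m = 0)
    (hAA : ∀ m m', ⁅A m, A m'⁆ = 0)
    (hP : ∀ m, 1 ≤ m → ∀ Z : L, ⁅A m, ⁅A m, Z⁆⁆ = 0 → ⁅A m, Z⁆ = 0)
    (hX : ∀ i, ∑ j ∈ Finset.range (k + 1), ⁅X j, A (i + j)⁆ = 0) :
    ∀ j m, j ≤ m → ⁅X j, A m⁆ = 0 := by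
  suffices H : ∀ d i, k + 1 ≤ i + d → ∀ j m, i + j ≤ m → ⁅X j, A m⁆ = 0 by
    intro j m hjm
    exact H (k + 1) 0 (by omega) j m (by omega)
  intro d
  induction d with
  | zero =>
      intro i hi j m hjm
      rw [hA m (by omega), lie_zero]
  | succ d IH =>
      intro i hi j m hjm
      rcases Nat.lt_or_ge (i + j) m with hlt | hge
      · exact IH (i + 1) (by omega) j m (by omega)
      have hm : m = i + j := by omega
      subst hm
      suffices Hin : ∀ e j', k + 1 ≤ j' + e → ⁅X j', A (i + j')⁆ = 0 from
        Hin (k + 1) j (by omega)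
      intro e
      induction e with
      | zero =>
          intro j' h
          rw [hA _ (by omega), lie_zero]
      | succ e IHe =>
          intro j' hj'
          by_cases hj'k : k < j'
          · rw [hA _ (by omega), lie_zero]
          push_neg at hj'k
          have hsum : ∑ j'' ∈ Finset.range (j' + 1), ⁅X j'', A (i + j'')⁆ = 0 := by
            have hsub : Finset.range (j' + 1) ⊆ Finset.range (k + 1) := by
              intro x hx
              simp only [Finset.mem_range] at hx ⊢
              omega
            have := Finset.sum_subset hsub (fun x hx hnx => by
              simp only [Finset.mem_range] at hx hnx
              exact IHe x (by omega))
            rw [this, hX i]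
          rcases Nat.eq_zero_or_pos (i + j') with hij0 | hijpos
          · have hi0 : i = 0 := by omega
            have hj0 : j' = 0 := by omega
            subst hi0; subst hj0
            simpa using hsum
          · have h1 : ∑ j'' ∈ Finset.range (j' + 1), ⁅A (i + j'), ⁅X j'', A (i + j'')⁆⁆ = 0 := by
              rw [← aux_lie_sum, hsum, lie_zero]
            rw [Finset.sum_range_succ] at h1
            have h2 : ∀ j'' ∈ Finset.range j', ⁅A (i + j'), ⁅X j'', A (i + j'')⁆⁆ = 0 := by
              intro j'' hj''
              rw [Finset.mem_range] at hj''
              have hX0 : ⁅X j'', A (i + j')⁆ = 0 := IH (i + 1) (by omega) j'' (i + j') (by omega)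
              have hz : ⁅A (i + j'), X j''⁆ = 0 := by
                rw [← lie_skew, hX0, neg_zero]
              rw [leibniz_lie, hz, zero_lie, hAA, lie_zero, add_zero]
            rw [Finset.sum_eq_zero h2, zero_add] at h1
            have hdbl : ⁅A (i + j'), ⁅A (i + j'), X j'⁆⁆ = 0 := by
              rw [← lie_skew (A (i + j')) (X j'), lie_neg, h1, neg_zero]
            have := hP (i + j') (by omega) (X j') hdbl
            rw [← lie_skew (X j') (A (i + j')), this, neg_zero]

private noncomputable def auxKK (N k : ℕ) (B : ℕ → Matrix (Fin N) (Fin N) ℂ) (j : ℕ) :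
    Submodule ℂ (Matrix (Fin N) (Fin N) ℂ) :=
  if j = 0 then
    ⨅ m ∈ Finset.range (k + 1),
      LinearMap.ker (LinearMap.mulLeft ℂ (B m) - LinearMap.mulRight ℂ (B m))
  else
    ⨅ m ∈ Finset.Icc j k,
      LinearMap.ker (LinearMap.mulLeft ℂ (B m) - LinearMap.mulRight ℂ (B m))

private lemma aux_mem_KK_iff (N k : ℕ) (B : ℕ → Matrix (Fin N) (Fin N) ℂ)
    (hBtop : ∀ i, k < i → B i = 0) (j : ℕ) (x : Matrix (Fin N) (Fin N) ℂ) :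
    x ∈ auxKK N k B j ↔ ∀ m, j ≤ m → ⁅B m, x⁆ = 0 := by
  have hker : ∀ m, x ∈ LinearMap.ker (LinearMap.mulLeft ℂ (B m) - LinearMap.mulRight ℂ (B m))
      ↔ ⁅B m, x⁆ = 0 := by
    intro m
    rw [LinearMap.mem_ker]
    constructor
    · intro h
      simpa [Ring.lie_def, LinearMap.sub_apply] using h
    · intro h
      simpa [Ring.lie_def, LinearMap.sub_apply] using h
  unfold auxKK
  split_ifs with h0
  · subst h0
    simp only [Submodule.mem_iInf, Finset.mem_range]
    constructor
    · intro h m _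
      by_cases hmk : m < k + 1
      · exact (hker m).mp (h m hmk)
      · rw [hBtop m (by omega), zero_lie]
    · intro h m hm
      exact (hker m).mpr (h m (by omega))
  · simp only [Submodule.mem_iInf, Finset.mem_Icc]
    constructor
    · intro h m hm
      by_cases hmk : m ≤ k
      · exact (hker m).mp (h m ⟨hm, hmk⟩)
      · rw [hBtop m (by omega), zero_lie]
    · intro h m hm
      exact (hker m).mpr (h m hm.1)

private noncomputable def auxPsi (N k : ℕ) (G : Submodule ℂ (Matrix (Fin N) (Fin N) ℂ))
    (B : ℕ → Matrix (Fin N) (Fin N) ℂ) :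
    (Fin (k + 1) → G) →ₗ[ℂ] (ℕ → Matrix (Fin N) (Fin N) ℂ) where
  toFun X := fun i => ∑ j : Fin (k + 1), ⁅(X j : Matrix (Fin N) (Fin N) ℂ), B (i + j)⁆
  map_add' X Y := by
    funext i
    simp [add_lie, Finset.sum_add_distrib]
  map_smul' c X := by
    funext i
    simp [smul_lie, Finset.smul_sum]

set_option maxHeartbeats 1000000 in
/-- Corollary `cor:specdimorb`, `dim 𝕆_H = δ(H)`. -/
theorem truncated_orbit_dim_eq_delta (N k : ℕ)
    (𝔤 : LieSubalgebra ℂ (Matrix (Fin N) (Fin N) ℂ))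
    (B : ℕ → Matrix (Fin N) (Fin N) ℂ)
    (hBmem : ∀ i, B i ∈ 𝔤) (hBtop : ∀ i, k < i → B i = 0)
    (hBcomm : ∀ i j, Commute (B i) (B j))
    (hBss : ∀ i, 1 ≤ i → Module.End.IsSemisimple (Matrix.mulVecLin (B i)))
    (W : Submodule ℂ (ℕ → Matrix (Fin N) (Fin N) ℂ))
    (hW : (W : Set (ℕ → Matrix (Fin N) (Fin N) ℂ)) =
      {Cf | ∃ X : ℕ → Matrix (Fin N) (Fin N) ℂ,
        (∀ j, X j ∈ 𝔤) ∧ (∀ j, k < j → X j = 0) ∧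
          ∀ i, Cf i = ∑ j ∈ Finset.range (k + 1), ⁅X j, B (i + j)⁆}) :
    (finrank ℂ W : ℤ)
      = (finrank ℂ 𝔤.toSubmodule : ℤ)
        + (∑ i ∈ Finset.Icc 1 k,
            ((finrank ℂ 𝔤.toSubmodule : ℤ) -
              (finrank ℂ
                ↥(𝔤.toSubmodule ⊓ ⨅ m ∈ Finset.Icc i k,
                  LinearMap.ker
                    (LinearMap.mulLeft ℂ (B m) - LinearMap.mulRight ℂ (B m))) : ℤ)))
        - (finrank ℂ
            ↥(𝔤.toSubmodule ⊓ ⨅ m ∈ Finset.range (k + 1),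
              LinearMap.ker
                (LinearMap.mulLeft ℂ (B m) - LinearMap.mulRight ℂ (B m))) : ℤ) := by
  classical
  set G : Submodule ℂ (Matrix (Fin N) (Fin N) ℂ) := 𝔤.toSubmodule with hG
  set Ψ := auxPsi N k G B with hΨ
  -- W is the range of Ψ
  have hWr : W = LinearMap.range Ψ := by
    apply SetLike.coe_injective
    rw [hW]
    ext Cf
    constructor
    · rintro ⟨X, hX1, hX2, hX3⟩
      refine ⟨fun j => ⟨X j, hX1 j⟩, ?_⟩
      funext i
      show (∑ j : Fin (k + 1), ⁅X (j : ℕ), B (i + j)⁆) = Cf i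
      rw [hX3 i]
      exact Fin.sum_univ_eq_sum_range (fun j => ⁅X j, B (i + j)⁆) (k + 1)
    · rintro ⟨Y, rfl⟩
      refine ⟨fun j => if h : j < k + 1 then ((Y ⟨j, h⟩ : G) : Matrix (Fin N) (Fin N) ℂ) else 0,
        ?_, ?_, ?_⟩
      · intro j
        by_cases h : j < k + 1
        · simp only [dif_pos h]; exact (Y ⟨j, h⟩ : G).2
        · simp only [dif_neg h]; exact Submodule.zero_mem _
      · intro j hj
        simp only [dif_neg (show ¬ j < k + 1 by omega)]
      · intro i
        show (∑ j : Fin (k + 1), ⁅(Y j : Matrix (Fin N) (Fin N) ℂ), B (i + j)⁆) = _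
        rw [← Fin.sum_univ_eq_sum_range
          (fun j => ⁅if h : j < k + 1 then ((Y ⟨j, h⟩ : G) : Matrix (Fin N) (Fin N) ℂ) else 0,
            B (i + j)⁆) (k + 1)]
        apply Finset.sum_congr rfl
        intro j _
        congr 1
        rw [dif_pos j.isLt]
  -- the kernel of Ψ
  set MM : Fin (k + 1) → Submodule ℂ G :=
    fun j => Submodule.comap G.subtype (auxKK N k B (j : ℕ)) with hMM
  set Θ : (∀ j : Fin (k + 1), MM j) →ₗ[ℂ] (Fin (k + 1) → G) :=
    LinearMap.pi (fun j => (MM j).subtype.comp (LinearMap.proj j)) with hΘ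
  have hΘapp : ∀ Y j, Θ Y j = (Y j : G) := by intro Y j; rfl
  have hΘinj : Function.Injective Θ := by
    intro Y Z h
    funext j
    have := congrFun h j
    rw [hΘapp, hΘapp] at this
    exact Subtype.ext this
  have hker : LinearMap.ker Ψ = LinearMap.range Θ := by
    ext X
    constructor
    · intro hX0
      have hEq : ∀ i, ∑ j ∈ Finset.range (k + 1),
          ⁅(fun j => if h : j < k + 1 then ((X ⟨j, h⟩ : G) : Matrix (Fin N) (Fin N) ℂ) else 0) j,
            B (i + j)⁆ = 0 := by
        intro i
        have h0 : (Ψ X) i = 0 := congrFun (LinearMap.mem_ker.mp hX0) i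
        rw [← Fin.sum_univ_eq_sum_range
          (fun j => ⁅if h : j < k + 1 then ((X ⟨j, h⟩ : G) : Matrix (Fin N) (Fin N) ℂ) else 0,
            B (i + j)⁆) (k + 1)]
        rw [← h0]
        apply Finset.sum_congr rfl
        intro j _
        congr 1
        rw [dif_pos j.isLt]
      have hAA : ∀ m m', ⁅B m, B m'⁆ = 0 := by
        intro m m'
        rw [Ring.lie_def, sub_eq_zero]
        exact hBcomm m m'
      have hP : ∀ m, 1 ≤ m → ∀ Z : Matrix (Fin N) (Fin N) ℂ,
          ⁅B m, ⁅B m, Z⁆⁆ = 0 → ⁅B m, Z⁆ = 0 := by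
        intro m hm Z hZ
        by_cases hmk : m ≤ k
        · exact aux_ss_ad (B m) (hBss m hm) Z hZ
        · rw [hBtop m (by omega), zero_lie]
      have hres := aux_key k B _ hBtop hAA hP hEq
      refine ⟨fun j => ⟨X j, ?_⟩, ?_⟩
      · rw [hMM, Submodule.mem_comap]
        rw [aux_mem_KK_iff N k B hBtop]
        simp only [Submodule.subtype_apply]
        intro m hm
        have hXe : (if h : (j : ℕ) < k + 1 then ((X ⟨(j : ℕ), h⟩ : G) : Matrix (Fin N) (Fin N) ℂ)
            else 0) = ((X j : G) : Matrix (Fin N) (Fin N) ℂ) := by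
          rw [dif_pos j.isLt]
        have := hres (j : ℕ) m hm
        rw [hXe] at this
        rw [← lie_skew, this, neg_zero]
      · funext j
        apply Subtype.ext
        rw [hΘapp]
    · rintro ⟨Y, rfl⟩
      rw [LinearMap.mem_ker]
      funext i
      show (∑ j : Fin (k + 1), ⁅((Θ Y j : G) : Matrix (Fin N) (Fin N) ℂ), B (i + j)⁆) = 0
      apply Finset.sum_eq_zero
      intro j _
      have hmem : ((Θ Y j : G) : Matrix (Fin N) (Fin N) ℂ) ∈ auxKK N k B (j : ℕ) := by
        rw [hΘapp]
        exact (Y j).2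
      have := (aux_mem_KK_iff N k B hBtop (j : ℕ) _).mp hmem (i + (j : ℕ)) (by omega)
      rw [← lie_skew, this, neg_zero]
  -- dimension bookkeeping
  have hrank := LinearMap.finrank_range_add_finrank_ker Ψ
  have hdom : finrank ℂ (Fin (k + 1) → G) = (k + 1) * finrank ℂ G := by
    rw [Module.finrank_pi_fintype]
    simp [Finset.sum_const, Finset.card_univ, mul_comm]
  have hcomap : ∀ Kp : Submodule ℂ (Matrix (Fin N) (Fin N) ℂ),
      finrank ℂ (Submodule.comap G.subtype Kp) = finrank ℂ ↥(G ⊓ Kp) := by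
    intro Kp
    have h1 := (Submodule.equivMapOfInjective G.subtype G.injective_subtype
      (Submodule.comap G.subtype Kp)).finrank_eq
    rw [Submodule.map_comap_subtype] at h1
    exact h1
  have hkerdim : finrank ℂ (LinearMap.ker Ψ)
      = ∑ j : Fin (k + 1), finrank ℂ ↥(G ⊓ auxKK N k B (j : ℕ)) := by
    rw [hker, LinearMap.finrank_range_of_inj hΘinj, Module.finrank_pi_fintype]
    apply Finset.sum_congr rfl
    intro j _
    rw [hMM]
    exact hcomap _
  have hsplitIdx : Finset.range (k + 1) = insert 0 (Finset.Icc 1 k) := by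
    ext x
    simp only [Finset.mem_range, Finset.mem_insert, Finset.mem_Icc]
    omega
  have hkersum : (∑ j : Fin (k + 1), finrank ℂ ↥(G ⊓ auxKK N k B (j : ℕ)))
      = finrank ℂ ↥(G ⊓ auxKK N k B 0)
        + ∑ i ∈ Finset.Icc 1 k, finrank ℂ ↥(G ⊓ auxKK N k B i) := by
    rw [Fin.sum_univ_eq_sum_range (fun j => finrank ℂ ↥(G ⊓ auxKK N k B j)) (k + 1)]
    rw [hsplitIdx, Finset.sum_insert (by simp)]
  have hKK0 : auxKK N k B 0
      = ⨅ m ∈ Finset.range (k + 1),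
          LinearMap.ker (LinearMap.mulLeft ℂ (B m) - LinearMap.mulRight ℂ (B m)) := by
    unfold auxKK; rw [if_pos rfl]
  have hKKi : ∀ i ∈ Finset.Icc 1 k, auxKK N k B i
      = ⨅ m ∈ Finset.Icc i k,
          LinearMap.ker (LinearMap.mulLeft ℂ (B m) - LinearMap.mulRight ℂ (B m)) := by
    intro i hi
    rw [Finset.mem_Icc] at hi
    unfold auxKK; rw [if_neg (by omega)]
  -- the main counting identity over ℕ
  have main : finrank ℂ W
      + (finrank ℂ ↥(G ⊓ ⨅ m ∈ Finset.range (k + 1),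
          LinearMap.ker (LinearMap.mulLeft ℂ (B m) - LinearMap.mulRight ℂ (B m)))
        + ∑ i ∈ Finset.Icc 1 k, finrank ℂ ↥(G ⊓ ⨅ m ∈ Finset.Icc i k,
            LinearMap.ker (LinearMap.mulLeft ℂ (B m) - LinearMap.mulRight ℂ (B m))))
      = (k + 1) * finrank ℂ G := by
    rw [hWr]
    rw [← hKK0]
    rw [← Finset.sum_congr rfl (fun i hi => by rw [← hKKi i hi])]
    rw [← hkersum, ← hkerdim, ← hdom]
    exact hrank
  have hfinal : (∑ i ∈ Finset.Icc 1 k,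
      ((finrank ℂ G : ℤ) -
        (finrank ℂ ↥(G ⊓ ⨅ m ∈ Finset.Icc i k,
          LinearMap.ker (LinearMap.mulLeft ℂ (B m) - LinearMap.mulRight ℂ (B m))) : ℤ)))
      = (k : ℤ) * (finrank ℂ G : ℤ)
        - ((∑ i ∈ Finset.Icc 1 k, finrank ℂ ↥(G ⊓ ⨅ m ∈ Finset.Icc i k,
            LinearMap.ker (LinearMap.mulLeft ℂ (B m) - LinearMap.mulRight ℂ (B m))) : ℕ) : ℤ) := by
    rw [Finset.sum_sub_distrib, Finset.sum_const, Nat.card_Icc]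
    push_cast
    ring
  rw [hfinal]
  have mainZ := congrArg (fun n : ℕ => (n : ℤ)) main
  push_cast at mainZ ⊢
  linarith [mainZ]
end

section
/- With notation as in the theory of unramified canonical forms: let H = (Σ_{i=1}^{k} H_i z^{-i} + H_res) z^{-1} where H_i are commuting semisimple elements and H_res commutes with all H_i, and let 𝔩_i = {X ∈ 𝔤 : [X, H_j] = 0 for all j ≥ i}. Then the stabilizer of H in G(ℂ[z]/⟨z^{k+1}⟩)_1 (the kernel of evaluation at z=0) equals {e^{X_k z^k} ⋯ e^{X_2 z^2} e^{X_1 z} : X_i ∈ 𝔩_i for i=1,...,k}, where H is regarded as an element of 𝔤 ⊗ (z^{-(k+1)}ℂ[[z]]/ℂ[[z]]) with the coadjoint action. -/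
namespace StabAux

variable {α : Type*}

lemma foldl_comp_apply (l : List (α → α)) (g : α → α) (x : α) :
    (l.foldl (fun acc f => f ∘ acc) g) x = l.foldl (fun y f => f y) (g x) := by
  induction l generalizing g x with
  | nil => rfl
  | cons a t ih => simpa using ih (a ∘ g) x

lemma evalFold (l : List (α → α)) (x : α) :
    (l.reverse.foldr (· ∘ ·) id) x = l.foldl (fun y f => f y) x := by
  rw [List.foldr_reverse]
  exact foldl_comp_apply l id x

lemma foldl_id (l : List (α → α)) (h : ∀ g ∈ l, g = id) (x : α) :
    l.foldl (fun y g => g y) x = x := by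
  induction l generalizing x with
  | nil => rfl
  | cons a t ih =>
    rw [List.foldl_cons, h a List.mem_cons_self]
    exact ih (fun g hg => h g (List.mem_cons_of_mem a hg)) x

lemma foldl_zero [Zero α] (l : List (α → α)) (h : ∀ g ∈ l, g 0 = 0) :
    l.foldl (fun y g => g y) 0 = 0 := by
  induction l with
  | nil => rfl
  | cons a t ih =>
    rw [List.foldl_cons, h a List.mem_cons_self]
    exact ih (fun g hg => h g (List.mem_cons_of_mem a hg))

lemma mem_take_ofFn {k : ℕ} (fs : Fin k → α) (n : ℕ) (g : α)
    (hg : g ∈ (List.ofFn fs).take n) : ∃ i : Fin k, (i : ℕ) < n ∧ fs i = g := by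
  rw [List.mem_iff_getElem] at hg
  obtain ⟨idx, hidx, hEq⟩ := hg
  have hlen : idx < n ∧ idx < k := by
    simpa [Nat.lt_min] using hidx
  refine ⟨⟨idx, hlen.2⟩, hlen.1, ?_⟩
  rw [← hEq]
  simp

lemma mem_drop_ofFn {k : ℕ} (fs : Fin k → α) (n : ℕ) (g : α)
    (hg : g ∈ (List.ofFn fs).drop n) : ∃ i : Fin k, n ≤ (i : ℕ) ∧ fs i = g := by
  rw [List.mem_iff_getElem] at hg
  obtain ⟨idx, hidx, hEq⟩ := hg
  have hlen : n + idx < k := by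
    have := hidx; simp [List.length_drop] at this; omega
  refine ⟨⟨n + idx, hlen⟩, Nat.le_add_right n idx, ?_⟩
  rw [← hEq, List.getElem_drop]
  simp

lemma foldl_ofFn_eq {k : ℕ} (fs : Fin k → α → α) (j : Fin k) (x : α)
    (hfront : ∀ j' : Fin k, j' < j → fs j' = id) :
    (List.ofFn fs).foldl (fun y g => g y) x
      = ((List.ofFn fs).drop ((j : ℕ) + 1)).foldl (fun y g => g y) (fs j x) := by
  have hj : (j : ℕ) < (List.ofFn fs).length := by simp
  conv_lhs => rw [← List.take_append_drop (j : ℕ) (List.ofFn fs),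
    List.drop_eq_getElem_cons hj]
  rw [List.foldl_append, List.foldl_cons]
  have h1 : (List.foldl (fun y g => g y) x (List.take (j : ℕ) (List.ofFn fs))) = x :=
    foldl_id _ (fun g hg => by
      obtain ⟨i, hi, rfl⟩ := mem_take_ofFn fs (j : ℕ) g hg
      exact hfront i (Fin.lt_def.mpr hi)) x
  rw [h1]
  congr 1
  simp

end StabAux
section TermVal

variable {L : Type*} [LieRing L] {k : ℕ} (X : Fin k → L)

lemma termVal_zero_of_min (m : Fin k → Fin (k + 1)) (j₀ : Fin k)
    (hfront : ∀ j' : Fin k, j' < j₀ → m j' = 0) (h1 : m j₀ ≠ 0) (v : L)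
    (hbr : ⁅X j₀, v⁆ = 0) :
    (List.ofFn (fun j : Fin k => (fun w : L => ⁅X j, w⁆)^[(m j : ℕ)])).foldl
      (fun y g => g y) v = 0 := by
  rw [StabAux.foldl_ofFn_eq _ j₀ v (fun j' hj' => by
    rw [hfront j' hj']; simp)]
  have hpos : 0 < (m j₀ : ℕ) := by
    rcases Nat.eq_zero_or_pos (m j₀ : ℕ) with h | h
    · exact absurd (Fin.ext h : m j₀ = 0) h1
    · exact h
  obtain ⟨t, ht⟩ : ∃ t, (m j₀ : ℕ) = t + 1 := ⟨(m j₀ : ℕ) - 1, by omega⟩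
  have hval : (fun w : L => ⁅X j₀, w⁆)^[(m j₀ : ℕ)] v = 0 := by
    rw [ht, Function.iterate_succ_apply, hbr]
    exact Function.iterate_fixed (lie_zero (X j₀)) t
  rw [hval]
  exact StabAux.foldl_zero _ (fun g hg => by
    obtain ⟨i, _, rfl⟩ := StabAux.mem_drop_ofFn _ _ g hg
    exact Function.iterate_fixed (lie_zero (X i)) _)

lemma termVal_single (m : Fin k → Fin (k + 1)) (j : Fin k)
    (h : ∀ j' : Fin k, j' ≠ j → m j' = 0) (hj : (m j : ℕ) = 1) (v : L) :
    (List.ofFn (fun j : Fin k => (fun w : L => ⁅X j, w⁆)^[(m j : ℕ)])).foldl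
      (fun y g => g y) v = ⁅X j, v⁆ := by
  rw [StabAux.foldl_ofFn_eq _ j v (fun j' hj' => by
    rw [h j' (ne_of_lt hj')]; simp)]
  have hval : (fun w : L => ⁅X j, w⁆)^[(m j : ℕ)] v = ⁅X j, v⁆ := by
    rw [hj]; simp
  rw [hval]
  exact StabAux.foldl_id _ (fun g hg => by
    obtain ⟨i, hi, rfl⟩ := StabAux.mem_drop_ofFn _ _ g hg
    have : i ≠ j := by
      intro hij; rw [hij] at hi; omega
    rw [h i this]; simp) _

lemma termVal_id (m : Fin k → Fin (k + 1)) (h : ∀ j' : Fin k, m j' = 0) (v : L) :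
    (List.ofFn (fun j : Fin k => (fun w : L => ⁅X j, w⁆)^[(m j : ℕ)])).foldl
      (fun y g => g y) v = v := by
  exact StabAux.foldl_id _ (fun g hg => by
    obtain ⟨i, rfl⟩ := List.mem_ofFn.mp hg
    rw [h i]; simp) v

end TermVal
section SS

open Polynomial in
lemma StabAux.sq_ker {K : Type*} [Field K] {M : Type*} [AddCommGroup M] [Module K M]
    (g : Module.End K M) (hsf : Squarefree (minpoly K g)) (x : M) (hx : g (g x) = 0) :
    g x = 0 := by
  have hq0 : (aeval g) (minpoly K g) = 0 := minpoly.aeval K g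
  by_cases hdvd : (X : K[X]) ∣ minpoly K g
  · obtain ⟨r, hr⟩ := hdvd
    have hXr : ¬ (X : K[X]) ∣ r := by
      rintro ⟨s, hs⟩
      exact Polynomial.not_isUnit_X (hsf X ⟨s, by rw [hr, hs]; ring⟩)
    obtain ⟨a, b, hab⟩ := (Polynomial.irreducible_X.coprime_iff_not_dvd).mpr hXr
    have key : aeval g (a * X + b * r) = 1 := by rw [hab]; simp
    have e2 : (aeval g r) (g x) = 0 := by
      have h1 : aeval g r * g = 0 := by
        have h2 : r * X = minpoly K g := by rw [hr]; ring
        calc aeval g r * g = aeval g (r * X) := by rw [map_mul, aeval_X]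
        _ = 0 := by rw [h2]; exact hq0
      calc (aeval g r) (g x) = (aeval g r * g) x := rfl
      _ = 0 := by rw [h1]; rfl
    calc g x = (aeval g (a * X + b * r)) (g x) := by rw [key]; rfl
    _ = (aeval g a) (g (g x)) + (aeval g b) ((aeval g r) (g x)) := by
        rw [map_add, map_mul, map_mul, aeval_X]; rfl
    _ = 0 := by rw [hx, e2]; simp
  · obtain ⟨a, b, hab⟩ := (Polynomial.irreducible_X.coprime_iff_not_dvd).mpr hdvd
    have key : aeval g (a * X + b * minpoly K g) = 1 := by rw [hab]; simp
    have e1 : (aeval g a) (g x) = x := by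
      have h1 : (aeval g (a * X + b * minpoly K g)) x = x := by rw [key]; rfl
      rw [map_add, map_mul, map_mul, aeval_X, hq0, mul_zero] at h1
      simpa using h1
    have comm : g * aeval g a = aeval g a * g := by
      have h2 : aeval g (X * a) = aeval g (a * X) := by rw [mul_comm]
      rw [map_mul, map_mul, aeval_X] at h2
      exact h2
    calc g x = g ((aeval g a) (g x)) := by rw [e1]
    _ = (g * aeval g a) (g x) := rfl
    _ = (aeval g a * g) (g x) := by rw [comm]
    _ = (aeval g a) (g (g x)) := rfl
    _ = 0 := by rw [hx]; simp

lemma StabAux.matrix_lie_lie {N : ℕ} (Bn : Matrix (Fin N) (Fin N) ℂ)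
    (hss : Module.End.IsSemisimple (Matrix.mulVecLin Bn)) (Z : Matrix (Fin N) (Fin N) ℂ)
    (h : ⁅Bn, ⁅Bn, Z⁆⁆ = 0) : ⁅Bn, Z⁆ = 0 := by
  classical
  have hEq : Matrix.mulVecLin Bn = Matrix.toLinAlgEquiv' Bn := LinearMap.ext fun v => rfl
  set p := minpoly ℂ (Matrix.mulVecLin Bn) with hp
  have hpB : Polynomial.aeval Bn p = 0 := by
    have h0 : Matrix.toLinAlgEquiv' (Polynomial.aeval Bn p) = 0 := by
      rw [← Polynomial.aeval_algHom_apply, ← hEq]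
      exact minpoly.aeval ℂ _
    have := congrArg (Matrix.toLinAlgEquiv' (R := ℂ) (n := Fin N)).symm h0
    simpa using this
  have hsf : Squarefree p := hss.minpoly_squarefree
  have haevL : ∀ q : Polynomial ℂ,
      Polynomial.aeval (LinearMap.mulLeft ℂ Bn) q = LinearMap.mulLeft ℂ (Polynomial.aeval Bn q) := by
    intro q
    induction q using Polynomial.induction_on' with
    | add p q hp hq =>
      rw [map_add, map_add, hp, hq]
      exact LinearMap.ext fun z => by
        simp [LinearMap.mulLeft_apply, add_mul]
    | monomial n c =>
      rw [Polynomial.aeval_monomial, Polynomial.aeval_monomial]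
      refine LinearMap.ext fun z => ?_
      rw [Module.End.mul_apply, LinearMap.pow_mulLeft]
      simp [LinearMap.mulLeft_apply, Module.algebraMap_end_apply, Algebra.smul_def,
        mul_assoc, smul_mul_assoc]
  have haevR : ∀ q : Polynomial ℂ,
      Polynomial.aeval (LinearMap.mulRight ℂ Bn) q = LinearMap.mulRight ℂ (Polynomial.aeval Bn q) := by
    intro q
    induction q using Polynomial.induction_on' with
    | add p q hp hq =>
      rw [map_add, map_add, hp, hq]
      exact LinearMap.ext fun z => by
        simp [LinearMap.mulRight_apply, mul_add]
    | monomial n c =>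
      rw [Polynomial.aeval_monomial, Polynomial.aeval_monomial]
      refine LinearMap.ext fun z => ?_
      rw [Module.End.mul_apply, LinearMap.pow_mulRight]
      simp only [LinearMap.mulRight_apply, Module.algebraMap_end_apply, Algebra.smul_def]
      rw [← mul_assoc, Algebra.commutes, mul_assoc]
  have hL : Module.End.IsSemisimple (LinearMap.mulLeft ℂ Bn) :=
    Module.End.isSemisimple_of_squarefree_aeval_eq_zero hsf
      (by rw [haevL, hpB]; exact LinearMap.mulLeft_zero_eq_zero _ _)
  have hR : Module.End.IsSemisimple (LinearMap.mulRight ℂ Bn) :=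
    Module.End.isSemisimple_of_squarefree_aeval_eq_zero hsf
      (by rw [haevR, hpB]; exact LinearMap.mulRight_zero_eq_zero _ _)
  have hsub : Module.End.IsSemisimple (LinearMap.mulLeft ℂ Bn - LinearMap.mulRight ℂ Bn) :=
    Module.End.IsSemisimple.sub_of_commute (LinearMap.commute_mulLeft_right Bn Bn) hL hR
  have hg : Squarefree (minpoly ℂ (LinearMap.mulLeft ℂ Bn - LinearMap.mulRight ℂ Bn)) :=
    hsub.minpoly_squarefree
  have happ : ∀ W : Matrix (Fin N) (Fin N) ℂ,
      (LinearMap.mulLeft ℂ Bn - LinearMap.mulRight ℂ Bn) W = ⁅Bn, W⁆ := fun W => by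
    simp [LinearMap.sub_apply, LinearMap.mulLeft_apply, LinearMap.mulRight_apply, Ring.lie_def]
  have := StabAux.sq_ker (LinearMap.mulLeft ℂ Bn - LinearMap.mulRight ℂ Bn) hg Z
    (by rw [happ, happ]; exact h)
  rw [← happ Z]; exact this

end SS
/-- The coefficient `C_i` of `z^{-i-1}` in the coadjoint action of
`g = e^{z^k X_k} ⋯ e^{z^2 X_2} e^{z X_1} ∈ G(ℂ[z]/⟨z^{k+1}⟩)_1` on
`B = Σ_i B_i z^{-i-1}`, given by
`C_i = Σ_{m_1,…,m_k ≥ 0} ad(X_k)^{m_k}∘⋯∘ad(X_1)^{m_1}(B_{i+m_1+2m_2+⋯+k m_k}) / (m_1!⋯m_k!)`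
(the sum is finite since `B_j = 0` for `j > k`; terms with any `m_j > k` vanish, so we
may sum over `m_j ≤ k`).  Here `X (j : Fin k)` stands for `X_{j+1}`. -/
noncomputable def coadCoeff (N k : ℕ) (X : Fin k → Matrix (Fin N) (Fin N) ℂ)
    (B : ℕ → Matrix (Fin N) (Fin N) ℂ) (i : ℕ) : Matrix (Fin N) (Fin N) ℂ :=
  ∑ m : Fin k → Fin (k + 1),
    ((∏ j : Fin k, ((m j : ℕ).factorial : ℂ))⁻¹) •
      (((List.ofFn (fun j : Fin k =>
          (fun w : Matrix (Fin N) (Fin N) ℂ => ⁅X j, w⁆)^[(m j : ℕ)])).reverse).foldr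
        (· ∘ ·) id)
        (B (i + ∑ j : Fin k, ((j : ℕ) + 1) * (m j : ℕ)))

attribute [local instance 100] LieRing.ofAssociativeRing

namespace StabAux

noncomputable def FTerm (N k : ℕ) (X : Fin k → Matrix (Fin N) (Fin N) ℂ)
    (B : ℕ → Matrix (Fin N) (Fin N) ℂ) (i : ℕ) (m : Fin k → Fin (k + 1)) :
    Matrix (Fin N) (Fin N) ℂ :=
  ((∏ j : Fin k, ((m j : ℕ).factorial : ℂ))⁻¹) •
    (List.ofFn (fun j : Fin k =>
      (fun w : Matrix (Fin N) (Fin N) ℂ => ⁅X j, w⁆)^[(m j : ℕ)])).foldl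
      (fun y g => g y) (B (i + ∑ j : Fin k, ((j : ℕ) + 1) * (m j : ℕ)))

def eVec {k : ℕ} (hk : 0 < k) (j : Fin k) : Fin k → Fin (k + 1) :=
  fun j' => if j' = j then (⟨1, by omega⟩ : Fin (k + 1)) else 0

lemma coadCoeff_eq_sum (N k : ℕ) (X : Fin k → Matrix (Fin N) (Fin N) ℂ)
    (B : ℕ → Matrix (Fin N) (Fin N) ℂ) (i : ℕ) :
    coadCoeff N k X B i = ∑ m : Fin k → Fin (k + 1), FTerm N k X B i m := by
  unfold coadCoeff FTerm
  exact Finset.sum_congr rfl fun m _ => by rw [StabAux.evalFold]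

lemma FTerm_zero (N k : ℕ) (X : Fin k → Matrix (Fin N) (Fin N) ℂ)
    (B : ℕ → Matrix (Fin N) (Fin N) ℂ) (i : ℕ) :
    FTerm N k X B i 0 = B i := by
  unfold FTerm
  rw [termVal_id X 0 (fun j' => rfl)]
  simp

lemma FTerm_unit (N k : ℕ) (X : Fin k → Matrix (Fin N) (Fin N) ℂ)
    (B : ℕ → Matrix (Fin N) (Fin N) ℂ) (i : ℕ) (hk : 0 < k) (j : Fin k) :
    FTerm N k X B i (eVec hk j) = ⁅X j, B (i + (j : ℕ) + 1)⁆ := by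
  unfold FTerm
  have hval : ∀ j' : Fin k, (eVec hk j j' : ℕ) = if j' = j then 1 else 0 := by
    intro j'
    by_cases h : j' = j <;> simp [eVec, h]
  have hprod : (∏ j' : Fin k, (((eVec hk j) j' : ℕ).factorial : ℂ)) = 1 := by
    refine Finset.prod_eq_one fun j' _ => ?_
    rw [hval j']
    by_cases h : j' = j <;> simp [h]
  have hwsum : ∑ j' : Fin k, ((j' : ℕ) + 1) * ((eVec hk j) j' : ℕ) = (j : ℕ) + 1 := by
    rw [Finset.sum_eq_single j]
    · rw [hval j, if_pos rfl, mul_one]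
    · intro j' _ hne
      rw [hval j', if_neg hne, mul_zero]
    · intro h
      exact absurd (Finset.mem_univ j) h
  rw [hprod, hwsum, termVal_single X (eVec hk j) j
    (fun j' hne => by simp [eVec, hne]) (by rw [hval j, if_pos rfl])]
  rw [inv_one, one_smul]
  congr 1

lemma lie_sum' {R : Type*} [Ring R] {ι : Type*} (x : R) (s : Finset ι) (f : ι → R) :
    ⁅x, ∑ i ∈ s, f i⁆ = ∑ i ∈ s, ⁅x, f i⁆ := by
  simp only [Ring.lie_def, Finset.mul_sum, Finset.sum_mul, ← Finset.sum_sub_distrib]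

lemma min_nonzero {k : ℕ} (m : Fin k → Fin (k + 1)) (hm : m ≠ 0) :
    ∃ j₀ : Fin k, m j₀ ≠ 0 ∧ ∀ j' : Fin k, j' < j₀ → m j' = 0 := by
  classical
  have hs : (Finset.univ.filter (fun j => m j ≠ 0)).Nonempty := by
    obtain ⟨j, hj⟩ := Function.ne_iff.mp hm
    exact ⟨j, Finset.mem_filter.mpr ⟨Finset.mem_univ _, hj⟩⟩
  refine ⟨(Finset.univ.filter (fun j => m j ≠ 0)).min' hs, ?_, ?_⟩
  · exact (Finset.mem_filter.mp ((Finset.univ.filter (fun j => m j ≠ 0)).min'_mem hs)).2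
  · intro j' hj'
    by_contra hj'0
    exact absurd (Finset.min'_le _ j' (Finset.mem_filter.mpr ⟨Finset.mem_univ _, hj'0⟩))
      (not_le.mpr hj')

end StabAux
/-- Proposition `prop:stabh`.
Let `𝔤 ⊆ 𝔤𝔩_N(ℂ)` and let `H = (Σ_{i=1}^{k} H_i z^{-i} + H_res) z^{-1}` be an unramified
canonical form (`B i = H_i ∈ 𝔤`, `B 0 = H_res`; the `H_i`, `i ≥ 1`, semisimple, mutually
commuting, and commuting with `H_res`), regarded in `𝔤 ⊗ z^{-(k+1)}ℂ[[z]]/ℂ[[z]]` with the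
coadjoint action.  Then the stabilizer of `H` in `G(ℂ[z]/⟨z^{k+1}⟩)_1` is exactly
`{e^{X_k z^k} ⋯ e^{X_2 z^2} e^{X_1 z} : X_i ∈ 𝔩_i, i = 1,…,k}` where
`𝔩_i = {Y ∈ 𝔤 : [Y, H_j] = 0 for all j ≥ i}`:
i.e. `Ad*(e^{X_k z^k}⋯e^{X_1 z})(H) = H` iff `X_i ∈ 𝔩_i` for all `i`. -/
theorem stabilizer_of_canonical_form (N k : ℕ)
    (𝔤 : LieSubalgebra ℂ (Matrix (Fin N) (Fin N) ℂ))
    (B : ℕ → Matrix (Fin N) (Fin N) ℂ)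
    (hBmem : ∀ i, B i ∈ 𝔤) (hBtop : ∀ i, k < i → B i = 0)
    (hBcomm : ∀ i j, Commute (B i) (B j))
    (hBss : ∀ i, 1 ≤ i → Module.End.IsSemisimple (Matrix.mulVecLin (B i)))
    (X : Fin k → Matrix (Fin N) (Fin N) ℂ) (hX : ∀ j, X j ∈ 𝔤) :
    (∀ i, coadCoeff N k X B i = B i) ↔
      (∀ j : Fin k, ∀ m : ℕ, (j : ℕ) + 1 ≤ m → ⁅X j, B m⁆ = 0) := by
  classical
  constructor
  · intro hC
    have hQ : ∀ d i, k ≤ i + d →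
        ∀ (j : Fin k) (n : ℕ), i + (j : ℕ) + 1 ≤ n → ⁅X j, B n⁆ = 0 := by
      intro d
      induction d with
      | zero =>
        intro i hik j n hn
        rw [hBtop n (by omega), lie_zero]
      | succ d ih =>
        intro i hik j n hn
        have hQ1 := ih (i + 1) (by omega)
        have hk : 0 < k := j.pos
        have hsum : ∑ j' : Fin k, ⁅X j', B (i + (j' : ℕ) + 1)⁆ = 0 := by
          have hCi : ∑ m : Fin k → Fin (k + 1), StabAux.FTerm N k X B i m = B i :=
            (StabAux.coadCoeff_eq_sum N k X B i).symm.trans (hC i)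
          set s : Finset (Fin k → Fin (k + 1)) :=
            insert 0 (Finset.image (StabAux.eVec hk) Finset.univ) with hs
          have hout : ∀ m ∈ (Finset.univ : Finset (Fin k → Fin (k + 1))), m ∉ s →
              StabAux.FTerm N k X B i m = 0 := by
            intro m _ hms
            have hm0 : m ≠ 0 := by
              intro h; exact hms (by rw [h, hs]; exact Finset.mem_insert_self _ _)
            have hme : ∀ j' : Fin k, m ≠ StabAux.eVec hk j' := by
              intro j' h
              apply hms
              rw [hs, h]
              exact Finset.mem_insert_of_mem
                (Finset.mem_image_of_mem _ (Finset.mem_univ j'))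
            obtain ⟨j₀, hj₀, hfront⟩ := StabAux.min_nonzero m hm0
            have hj₀pos : 1 ≤ (m j₀ : ℕ) := Nat.pos_of_ne_zero (fun h => hj₀ (Fin.ext h))
            have hw : (j₀ : ℕ) + 2 ≤ ∑ j'' : Fin k, ((j'' : ℕ) + 1) * (m j'' : ℕ) := by
              have hle : ((j₀ : ℕ) + 1) * (m j₀ : ℕ)
                  ≤ ∑ j'' : Fin k, ((j'' : ℕ) + 1) * (m j'' : ℕ) :=
                Finset.single_le_sum
                  (f := fun j'' : Fin k => ((j'' : ℕ) + 1) * (m j'' : ℕ))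
                  (fun j'' _ => Nat.zero_le _) (Finset.mem_univ j₀)
              by_cases h2 : 2 ≤ (m j₀ : ℕ)
              · have h3 : ((j₀ : ℕ) + 1) * 2 ≤ ((j₀ : ℕ) + 1) * (m j₀ : ℕ) :=
                  Nat.mul_le_mul_left _ h2
                omega
              · have h1 : (m j₀ : ℕ) = 1 := by omega
                have hex : ∃ j₁ : Fin k, j₁ ≠ j₀ ∧ (m j₁ : ℕ) ≠ 0 := by
                  by_contra hc
                  push_neg at hc
                  apply hme j₀
                  funext j''
                  by_cases hj'' : j'' = j₀
                  · subst hj''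
                    exact Fin.ext (by rw [h1]; simp [StabAux.eVec])
                  · exact Fin.ext (by
                      rw [hc j'' hj'']
                      simp [StabAux.eVec, hj''])
                obtain ⟨j₁, hne, hj₁⟩ := hex
                have hpair : ∑ j'' ∈ ({j₀, j₁} : Finset (Fin k)),
                      ((j'' : ℕ) + 1) * (m j'' : ℕ)
                    ≤ ∑ j'' : Fin k, ((j'' : ℕ) + 1) * (m j'' : ℕ) :=
                  Finset.sum_le_sum_of_subset (Finset.subset_univ _)
                rw [Finset.sum_pair hne.symm] at hpair
                have h3 : ((j₁ : ℕ) + 1) * 1 ≤ ((j₁ : ℕ) + 1) * (m j₁ : ℕ) :=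
                  Nat.mul_le_mul_left _ (Nat.pos_of_ne_zero hj₁)
                rw [h1, mul_one] at hpair
                omega
            have hbr : ⁅X j₀, B (i + ∑ j'' : Fin k, ((j'' : ℕ) + 1) * (m j'' : ℕ))⁆ = 0 :=
              hQ1 j₀ _ (by omega)
            unfold StabAux.FTerm
            rw [termVal_zero_of_min X m j₀ hfront hj₀ _ hbr, smul_zero]
          have hinj : ∀ x ∈ (Finset.univ : Finset (Fin k)), ∀ y ∈ Finset.univ,
              StabAux.eVec hk x = StabAux.eVec hk y → x = y := by
            intro x _ y _ hxy
            by_contra hne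
            have h := congrFun hxy x
            simp only [StabAux.eVec, if_pos rfl, if_neg hne] at h
            have := congrArg Fin.val h
            simp at this
          have h0ni : (0 : Fin k → Fin (k + 1)) ∉ Finset.image (StabAux.eVec hk) Finset.univ := by
            simp only [Finset.mem_image]
            rintro ⟨j', -, hj'⟩
            have h := congrFun hj' j'
            simp only [StabAux.eVec, if_pos rfl] at h
            have := congrArg Fin.val h
            simp at this
          have hsplit : ∑ m ∈ s, StabAux.FTerm N k X B i m = B i := by
            rw [Finset.sum_subset (Finset.subset_univ s) hout]
            exact hCi
          rw [hs, Finset.sum_insert h0ni, StabAux.FTerm_zero, Finset.sum_image hinj] at hsplit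
          have heq : ∑ j' : Fin k, StabAux.FTerm N k X B i (StabAux.eVec hk j')
              = ∑ j' : Fin k, ⁅X j', B (i + (j' : ℕ) + 1)⁆ :=
            Finset.sum_congr rfl fun j' _ => StabAux.FTerm_unit N k X B i hk j'
          rw [heq] at hsplit
          exact add_eq_left.mp hsplit
        have hYstep : ∀ j' : Fin k,
            (∀ j'' : Fin k, j' < j'' → ⁅X j'', B (i + (j'' : ℕ) + 1)⁆ = 0) →
            ⁅X j', B (i + (j' : ℕ) + 1)⁆ = 0 := by
          intro j' hgt
          have hIic : ∑ j'' ∈ Finset.Iic j', ⁅X j'', B (i + (j'' : ℕ) + 1)⁆ = 0 := by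
            rw [Finset.sum_subset (Finset.subset_univ (Finset.Iic j'))
              (fun j'' _ hj'' => hgt j'' (by simpa using hj''))]
            exact hsum
          have hD : ⁅B (i + (j' : ℕ) + 1),
                ∑ j'' ∈ Finset.Iic j', ⁅X j'', B (i + (j'' : ℕ) + 1)⁆⁆
              = ⁅B (i + (j' : ℕ) + 1), ⁅X j', B (i + (j' : ℕ) + 1)⁆⁆ := by
            rw [StabAux.lie_sum']
            refine Finset.sum_eq_single_of_mem j' (Finset.mem_Iic.mpr le_rfl) ?_
            intro j'' hj'' hne
            have hlt : j'' < j' := lt_of_le_of_ne (Finset.mem_Iic.mp hj'') hne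
            rw [leibniz_lie]
            have c1 : ⁅B (i + (j' : ℕ) + 1), X j''⁆ = 0 := by
              rw [← lie_skew, hQ1 j'' _ (by
                have := Fin.lt_def.mp hlt; omega), neg_zero]
            have c2 : ⁅B (i + (j' : ℕ) + 1), B (i + (j'' : ℕ) + 1)⁆ = 0 :=
              (hBcomm _ _).lie_eq
            rw [c1, c2, zero_lie, lie_zero, add_zero]
          rw [hIic, lie_zero] at hD
          have hsk : ⁅B (i + (j' : ℕ) + 1), X j'⁆ = -⁅X j', B (i + (j' : ℕ) + 1)⁆ :=
            (lie_skew _ _).symm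
          have hlie : ⁅B (i + (j' : ℕ) + 1), ⁅B (i + (j' : ℕ) + 1), X j'⁆⁆ = 0 := by
            rw [hsk, lie_neg, ← hD, neg_zero]
          have hzero := StabAux.matrix_lie_lie (B (i + (j' : ℕ) + 1))
            (hBss _ (by omega)) (X j') hlie
          rw [← lie_skew, hzero, neg_zero]
        have hY : ∀ t : ℕ, ∀ j' : Fin k, k ≤ (j' : ℕ) + 1 + t →
            ⁅X j', B (i + (j' : ℕ) + 1)⁆ = 0 := by
          intro t
          induction t with
          | zero =>
            intro j' hj'
            refine hYstep j' fun j'' hlt => absurd (Fin.lt_def.mp hlt) (by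
              have := j''.isLt; omega)
          | succ t iht =>
            intro j' hj'
            exact hYstep j' fun j'' hlt => iht j'' (by
              have := Fin.lt_def.mp hlt; omega)
        rcases Nat.lt_or_ge n (i + (j : ℕ) + 2) with hlt | hge
        · have hn' : n = i + (j : ℕ) + 1 := by omega
          rw [hn']
          exact hY k j (by omega)
        · exact hQ1 j n (by omega)
    intro j mN hjm
    exact hQ k 0 (by omega) j mN (by omega)
  · intro hcom i
    have hvan : ∀ m : Fin k → Fin (k + 1), m ≠ 0 → StabAux.FTerm N k X B i m = 0 := by
      intro m hm
      obtain ⟨j₀, hj₀, hfront⟩ := StabAux.min_nonzero m hm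
      have hj₀pos : 1 ≤ (m j₀ : ℕ) := Nat.pos_of_ne_zero (fun h => hj₀ (Fin.ext h))
      have hle : ((j₀ : ℕ) + 1) * (m j₀ : ℕ)
          ≤ ∑ j'' : Fin k, ((j'' : ℕ) + 1) * (m j'' : ℕ) :=
        Finset.single_le_sum
          (f := fun j'' : Fin k => ((j'' : ℕ) + 1) * (m j'' : ℕ))
          (fun j'' _ => Nat.zero_le _) (Finset.mem_univ j₀)
      have h3 : ((j₀ : ℕ) + 1) * 1 ≤ ((j₀ : ℕ) + 1) * (m j₀ : ℕ) :=
        Nat.mul_le_mul_left _ hj₀pos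
      have hbr : ⁅X j₀, B (i + ∑ j'' : Fin k, ((j'' : ℕ) + 1) * (m j'' : ℕ))⁆ = 0 :=
        hcom j₀ _ (by omega)
      unfold StabAux.FTerm
      rw [termVal_zero_of_min X m j₀ hfront hj₀ _ hbr, smul_zero]
    rw [StabAux.coadCoeff_eq_sum N k X B i,
      Fintype.sum_eq_single (0 : Fin k → Fin (k + 1)) hvan]
    exact StabAux.FTerm_zero N k X B i
end
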